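/- arXiv:2603.13407 — 3 statements merged into one kernel-verified Lean document; each statement's English description precedes it below -/
import Mathlib

section
/- Let 𝒴 be a finite set, D₀, D₁ ⊆ 𝒴 nonempty, M_b := {x ∈ ℝ^𝒴 : supp(x) ⊆ D_b and Σ_{y∈D_b} x(y) = 0}, M := M₀ + M₁, and Π_J the orthogonal projection of ℝ^𝒴 onto M^⊥. For b ∈ {0,1} let p_b be a probability vector supported on D_b and μ_b := Σ_{y∈D_b} p_b(y) e_y. Let 𝒞 be the set of connected components of the hypergraph on vertex set D₀∪D₁ with hyperedges D₀ and D₁, and for C ∈ 𝒞 let m_C := Π_J e_y for any y ∈ C (well-defined), and set p̄_b(C) := Σ_{y∈D_b∩C} p_b(y). Then Δ := Π_J(μ₁ − μ₀) satisfies Δ = Σ_{C∈𝒞} (p̄₁(C) − p̄₀(C)) · m_C. -/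
open Finset

/-- The dominant tangent subspace `M_D = {x : supp(x) ⊆ D, Σ_{y∈D} x(y) = 0}`
inside the Euclidean space `ℝ^𝒴`. -/
noncomputable def tangent {Y : Type*} [Fintype Y] [DecidableEq Y] (D : Finset Y) :
    Submodule ℝ (EuclideanSpace ℝ Y) where
  carrier := {x | (∀ y ∉ D, x y = 0) ∧ ∑ y ∈ D, x y = 0}
  add_mem' := by
    rintro a b ⟨ha1, ha2⟩ ⟨hb1, hb2⟩
    refine ⟨fun y hy => ?_, ?_⟩
    · show a y + b y = 0
      rw [ha1 y hy, hb1 y hy, add_zero]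
    · show ∑ y ∈ D, (a y + b y) = 0
      rw [Finset.sum_add_distrib, ha2, hb2, add_zero]
  zero_mem' := ⟨fun y _ => rfl, by simp⟩
  smul_mem' := by
    rintro c a ⟨ha1, ha2⟩
    refine ⟨fun y hy => ?_, ?_⟩
    · show c * a y = 0
      rw [ha1 y hy, mul_zero]
    · show ∑ y ∈ D, c * a y = 0
      rw [← Finset.mul_sum, ha2, mul_zero]

/-- The quotient projection `Π_J`: orthogonal projection of `ℝ^𝒴` onto `M^⊥`,
where `M = M_{D₀} + M_{D₁}` is the dominant tangent space. -/
noncomputable def PiJ {Y : Type*} [Fintype Y] [DecidableEq Y] (D₀ D₁ : Finset Y) :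
    EuclideanSpace ℝ Y → EuclideanSpace ℝ Y :=
  fun x => (Submodule.orthogonalProjectionOnto (tangent D₀ + tangent D₁)ᗮ x : EuclideanSpace ℝ Y)


/-- One step in the hypergraph with vertex set `D₀ ∪ D₁` and hyperedges `D₀, D₁`:
two vertices are adjacent iff they lie in a common hyperedge. -/
def hstep {Y : Type*} (D₀ D₁ : Finset Y) (y y' : Y) : Prop :=
  (y ∈ D₀ ∧ y' ∈ D₀) ∨ (y ∈ D₁ ∧ y' ∈ D₁)

open scoped Classical in
/-- The connected component of `y` in the hypergraph with hyperedges `D₀, D₁`. -/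
noncomputable def hcomponent {Y : Type*} [DecidableEq Y] (D₀ D₁ : Finset Y) (y : Y) :
    Finset Y :=
  (D₀ ∪ D₁).filter (fun y' => Relation.ReflTransGen (hstep D₀ D₁) y y')

/-- The set of connected components of the hypergraph on `D₀ ∪ D₁` with
hyperedges `D₀` and `D₁`. -/
noncomputable def hcomponents {Y : Type*} [DecidableEq Y] (D₀ D₁ : Finset Y) :
    Finset (Finset Y) :=
  (D₀ ∪ D₁).image (hcomponent D₀ D₁)


section Aux
variable {Y : Type*} [DecidableEq Y]

lemma hstep_symm (D₀ D₁ : Finset Y) : Symmetric (hstep D₀ D₁) := by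
  rintro a b (⟨h1, h2⟩ | ⟨h1, h2⟩)
  · exact Or.inl ⟨h2, h1⟩
  · exact Or.inr ⟨h2, h1⟩

lemma mem_hcomponent_iff {D₀ D₁ : Finset Y} {z y : Y} :
    y ∈ hcomponent D₀ D₁ z ↔ y ∈ D₀ ∪ D₁ ∧ Relation.ReflTransGen (hstep D₀ D₁) z y := by
  classical
  simp [hcomponent]

lemma self_mem_hcomponent {D₀ D₁ : Finset Y} {y : Y} (hy : y ∈ D₀ ∪ D₁) :
    y ∈ hcomponent D₀ D₁ y :=
  mem_hcomponent_iff.mpr ⟨hy, Relation.ReflTransGen.refl⟩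

lemma hcomponent_eq_of_mem {D₀ D₁ : Finset Y} {z y : Y}
    (hy : y ∈ hcomponent D₀ D₁ z) : hcomponent D₀ D₁ y = hcomponent D₀ D₁ z := by
  obtain ⟨-, hrel⟩ := mem_hcomponent_iff.mp hy
  ext w
  rw [mem_hcomponent_iff, mem_hcomponent_iff]
  constructor
  · rintro ⟨hw, h⟩; exact ⟨hw, hrel.trans h⟩
  · rintro ⟨hw, h⟩
    exact ⟨hw, (haveI : Std.Symm (hstep D₀ D₁) := ⟨hstep_symm D₀ D₁⟩; Std.Symm.symm _ _ hrel).trans h⟩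

variable [Fintype Y]

lemma single_sub_single_mem_tangent {D : Finset Y} {y y' : Y}
    (hy : y ∈ D) (hy' : y' ∈ D) :
    (EuclideanSpace.single y (1:ℝ) - EuclideanSpace.single y' 1) ∈ tangent D := by
  constructor
  · intro z hz
    show EuclideanSpace.single y (1:ℝ) z - EuclideanSpace.single y' 1 z = 0
    rw [EuclideanSpace.single_apply, EuclideanSpace.single_apply,
      if_neg (by rintro rfl; exact hz hy), if_neg (by rintro rfl; exact hz hy'), sub_zero]
  · have : ∀ z ∈ D, ((EuclideanSpace.single y (1:ℝ) - EuclideanSpace.single y' 1 :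
        EuclideanSpace ℝ Y)) z =
        (if z = y then (1:ℝ) else 0) - (if z = y' then 1 else 0) := by
      intro z _
      show EuclideanSpace.single y (1:ℝ) z - EuclideanSpace.single y' 1 z = _
      rw [EuclideanSpace.single_apply, EuclideanSpace.single_apply]
    rw [Finset.sum_congr rfl this, Finset.sum_sub_distrib]
    simp [Finset.sum_ite_eq', hy, hy']

lemma single_sub_single_mem_M {D₀ D₁ : Finset Y} {y y' : Y}
    (h : Relation.ReflTransGen (hstep D₀ D₁) y y') :
    (EuclideanSpace.single y (1:ℝ) - EuclideanSpace.single y' 1) ∈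
      tangent D₀ + tangent D₁ := by
  induction h with
  | refl => simp
  | tail _ hstep ih =>
    rename_i b c _
    have hbc : (EuclideanSpace.single b (1:ℝ) - EuclideanSpace.single c 1) ∈
        tangent D₀ + tangent D₁ := by
      rcases hstep with ⟨h1, h2⟩ | ⟨h1, h2⟩
      · exact Submodule.mem_sup_left (single_sub_single_mem_tangent h1 h2)
      · exact Submodule.mem_sup_right (single_sub_single_mem_tangent h1 h2)
    have := add_mem ih hbc
    simpa using this

lemma PiJ_eq_of_rel {D₀ D₁ : Finset Y} {y y' : Y}
    (h : Relation.ReflTransGen (hstep D₀ D₁) y y') :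
    PiJ D₀ D₁ (EuclideanSpace.single y 1) = PiJ D₀ D₁ (EuclideanSpace.single y' 1) := by
  have hz : Submodule.orthogonalProjectionOnto (tangent D₀ + tangent D₁)ᗮ
      (EuclideanSpace.single y (1:ℝ) - EuclideanSpace.single y' 1) = 0 :=
    Submodule.orthogonalProjectionOnto_apply_of_mem_orthogonal
      (Submodule.le_orthogonal_orthogonal _ (single_sub_single_mem_M h))
  rw [map_sub, sub_eq_zero] at hz
  unfold PiJ
  exact congrArg _ hz

end Aux

/-- The component formula for the quotient shift: `m_C := Π_J e_y` is well defined
for `y ∈ C` (any component `C`), and with `p̄_b(C) = Σ_{y ∈ D_b ∩ C} p_b(y)` one has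
`Δ = Π_J(μ₁ − μ₀) = Σ_{C} (p̄₁(C) − p̄₀(C)) • m_C`. -/
theorem quotient_shift_component_formula
    {Y : Type*} [Fintype Y] [DecidableEq Y]
    (D : Fin 2 → Finset Y) (hD : ∀ b, (D b).Nonempty)
    (p : Fin 2 → Y → ℝ)
    (hp_nonneg : ∀ b y, 0 ≤ p b y)
    (hp_supp : ∀ b, ∀ y ∉ D b, p b y = 0)
    (hp_sum : ∀ b, ∑ y ∈ D b, p b y = 1) :
    (∀ C ∈ hcomponents (D 0) (D 1), ∀ y ∈ C, ∀ y' ∈ C,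
      PiJ (D 0) (D 1) (EuclideanSpace.single y 1) =
        PiJ (D 0) (D 1) (EuclideanSpace.single y' 1)) ∧
    (∀ m : Finset Y → EuclideanSpace ℝ Y,
      (∀ C ∈ hcomponents (D 0) (D 1), ∀ y ∈ C,
        m C = PiJ (D 0) (D 1) (EuclideanSpace.single y 1)) →
      PiJ (D 0) (D 1)
          ((∑ y ∈ D 1, p 1 y • EuclideanSpace.single y 1) -
            ∑ y ∈ D 0, p 0 y • EuclideanSpace.single y 1) =
        ∑ C ∈ hcomponents (D 0) (D 1),
          ((∑ y ∈ D 1 ∩ C, p 1 y) - ∑ y ∈ D 0 ∩ C, p 0 y) • m C) := by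
  classical
  set D₀ := D 0
  set D₁ := D 1
  have hwd : ∀ C ∈ hcomponents D₀ D₁, ∀ y ∈ C, ∀ y' ∈ C,
      PiJ D₀ D₁ (EuclideanSpace.single y 1) = PiJ D₀ D₁ (EuclideanSpace.single y' 1) := by
    intro C hC y hy y' hy'
    obtain ⟨z, hz, rfl⟩ := Finset.mem_image.mp hC
    obtain ⟨-, h1⟩ := mem_hcomponent_iff.mp hy
    obtain ⟨-, h2⟩ := mem_hcomponent_iff.mp hy'
    exact PiJ_eq_of_rel
      ((haveI : Std.Symm (hstep D₀ D₁) := ⟨hstep_symm D₀ D₁⟩; Std.Symm.symm _ _ h1).trans h2)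
  refine ⟨hwd, ?_⟩
  intro m hm
  set M := (tangent D₀ + tangent D₁ : Submodule ℝ (EuclideanSpace ℝ Y))
  set L : EuclideanSpace ℝ Y →ₗ[ℝ] EuclideanSpace ℝ Y :=
    Mᗮ.subtype ∘ₗ (Submodule.orthogonalProjectionOnto Mᗮ).toLinearMap with hL
  have hPiJ : ∀ x, PiJ D₀ D₁ x = L x := fun x => rfl
  have hsum : ∀ b : Fin 2, ∑ y ∈ D b, p b y • L (EuclideanSpace.single y 1) =
      ∑ C ∈ hcomponents D₀ D₁, (∑ y ∈ D b ∩ C, p b y) • m C := by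
    intro b
    have hmaps : ∀ y ∈ D b, hcomponent D₀ D₁ y ∈ hcomponents D₀ D₁ := by
      intro y hy
      have hyu : y ∈ D₀ ∪ D₁ := by
        fin_cases b
        · exact Finset.mem_union_left _ hy
        · exact Finset.mem_union_right _ hy
      exact Finset.mem_image_of_mem _ hyu
    rw [← Finset.sum_fiberwise_of_maps_to hmaps
      (fun y => p b y • L (EuclideanSpace.single y 1))]
    refine Finset.sum_congr rfl fun C hC => ?_
    have hfilter : (D b).filter (fun y => hcomponent D₀ D₁ y = C) = D b ∩ C := by
      ext y
      simp only [Finset.mem_filter, Finset.mem_inter]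
      constructor
      · rintro ⟨hy, rfl⟩
        have hyu : y ∈ D₀ ∪ D₁ := by
          fin_cases b
          · exact Finset.mem_union_left _ hy
          · exact Finset.mem_union_right _ hy
        exact ⟨hy, self_mem_hcomponent hyu⟩
      · rintro ⟨hy, hyC⟩
        obtain ⟨z, hz, rfl⟩ := Finset.mem_image.mp hC
        exact ⟨hy, hcomponent_eq_of_mem hyC⟩
    have hterm : ∀ y ∈ (D b).filter (fun y => hcomponent D₀ D₁ y = C),
        p b y • L (EuclideanSpace.single y 1) = p b y • m C := by
      intro y hy
      obtain ⟨hyb, hyC⟩ := Finset.mem_filter.mp hy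
      have hyu : y ∈ D₀ ∪ D₁ := by
        fin_cases b
        · exact Finset.mem_union_left _ hyb
        · exact Finset.mem_union_right _ hyb
      have : m C = PiJ D₀ D₁ (EuclideanSpace.single y 1) :=
        hm C hC y (hyC ▸ self_mem_hcomponent hyu)
      rw [this, hPiJ]
    rw [Finset.sum_congr rfl hterm, hfilter, ← Finset.sum_smul]
  have hL1 : L ((∑ y ∈ D₁, p 1 y • EuclideanSpace.single y 1) -
      ∑ y ∈ D₀, p 0 y • EuclideanSpace.single y 1) =
      (∑ y ∈ D₁, p 1 y • L (EuclideanSpace.single y 1)) -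
      ∑ y ∈ D₀, p 0 y • L (EuclideanSpace.single y 1) := by
    rw [map_sub, map_sum, map_sum]
    simp_rw [map_smul]
  rw [hPiJ, hL1, hsum 1, hsum 0, ← Finset.sum_sub_distrib]
  exact Finset.sum_congr rfl fun C _ => (sub_smul _ _ _).symm
end

section
/- Assume the general finite-dominant sparse-error critical regime. Fix b ∈ {0,1}, let Y_n ~ W_b^{(n)}, X_n := e_{Y_n} − μ_b, and for (u,v) ∈ M × M^⊥ define φ_{b,n}(u,v) := E exp(i⟨u, n^{−1/2}Π_G X_n⟩ + i⟨v, Π_J X_n⟩). Then, uniformly on compact subsets of M × M^⊥, φ_{b,n}(u,v) = 1 − (1/(2n))⟨u, Γ_b u⟩ + (1/n)·Σ_{y∉D_b} α_b(y)(e^{i⟨v, j_{b,y}⟩} − 1) + o(n^{−1}), and consequently log φ_{b,n}(u,v) = −(1/(2n))⟨u, Γ_b u⟩ + (1/n)·Σ_{y∉D_b} α_b(y)(e^{i⟨v, j_{b,y}⟩} − 1) + o(n^{−1}). -/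
open Finset

open Filter

/-- The general finite-dominant sparse-error critical regime
(Definition 2.2 of the paper): a finite alphabet `Y`, for each `b ∈ {0,1}` a nonempty
dominant set `D_b`, a dominant law `p_b ∈ Δ(D_b)` with full support on `D_b`,
rare intensities `α_b(y) ≥ 0` for `y ∉ D_b`, and local randomizers `W_b^{(n)}` with
`W_b^{(n)}(y) = p_b(y) + O(n⁻¹)` on `D_b` and `n·W_b^{(n)}(y) → α_b(y)` off `D_b`. -/
structure Regime (Y : Type*) [Fintype Y] [DecidableEq Y] where
  D : Fin 2 → Finset Y
  D_nonempty : ∀ b, (D b).Nonempty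
  p : Fin 2 → Y → ℝ
  p_pos : ∀ b, ∀ y ∈ D b, 0 < p b y
  p_supp : ∀ b, ∀ y ∉ D b, p b y = 0
  p_sum : ∀ b, ∑ y ∈ D b, p b y = 1
  α : Fin 2 → Y → ℝ
  α_nonneg : ∀ b y, 0 ≤ α b y
  W : Fin 2 → ℕ → Y → ℝ
  W_nonneg : ∀ b n y, 0 ≤ W b n y
  W_sum : ∀ b n, ∑ y, W b n y = 1
  W_dom : ∀ b, ∃ C : ℝ, ∀ y ∈ D b, ∀ n : ℕ, 1 ≤ n → |W b n y - p b y| ≤ C / n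
  W_rare : ∀ b, ∀ y ∉ D b,
    Tendsto (fun n : ℕ => (n : ℝ) * W b n y) atTop (nhds (α b y))

namespace Regime

variable {Y : Type*} [Fintype Y] [DecidableEq Y] (R : Regime Y)

/-- The dominant mean vector `μ_b = Σ_{y∈D_b} p_b(y) e_y`. -/
noncomputable def μvec (b : Fin 2) : EuclideanSpace ℝ Y :=
  ∑ y ∈ R.D b, R.p b y • EuclideanSpace.single y 1

/-- The dominant tangent space `M = M₀ + M₁`. -/
noncomputable def M : Submodule ℝ (EuclideanSpace ℝ Y) :=
  tangent (R.D 0) + tangent (R.D 1)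

/-- The Gaussian-block projection `Π_G`: orthogonal projection onto `M`. -/
noncomputable def PiG : EuclideanSpace ℝ Y → EuclideanSpace ℝ Y :=
  fun x => (Submodule.orthogonalProjectionOnto R.M x : EuclideanSpace ℝ Y)

/-- The quotient projection `Π_J := I − Π_G`. -/
noncomputable def PiJ' : EuclideanSpace ℝ Y → EuclideanSpace ℝ Y :=
  fun x => x - R.PiG x

/-- The jump vector `j_{b,y} = Π_J(e_y − μ_b)`. -/
noncomputable def jump (b : Fin 2) (y : Y) : EuclideanSpace ℝ Y :=
  R.PiJ' (EuclideanSpace.single y 1 - R.μvec b)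

/-- The dominant covariance quadratic form `⟨u, Γ_b u⟩ = Σ_{y∈D_b} p_b(y)⟨u, e_y−μ_b⟩²`. -/
noncomputable def gammaQuad (b : Fin 2) (u : EuclideanSpace ℝ Y) : ℝ :=
  ∑ y ∈ R.D b, R.p b y * (inner ℝ u (EuclideanSpace.single y 1 - R.μvec b) : ℝ) ^ 2

end Regime

namespace Regime

variable {Y : Type*} [Fintype Y] [DecidableEq Y]

/-- The one-user characteristic function
`φ_{b,n}(u,v) = E exp(i⟨u, n^{−1/2}Π_G X⟩ + i⟨v, Π_J X⟩)` for `X = e_Y − μ_b`,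
`Y ~ W_b^{(n)}`. -/
noncomputable def oneUserCF (R : Regime Y) (b : Fin 2) (n : ℕ)
    (u v : EuclideanSpace ℝ Y) : ℂ :=
  ∑ y, (R.W b n y : ℂ) * Complex.exp (Complex.I *
    (((inner ℝ u (((n : ℝ) ^ (-(1 : ℝ) / 2)) •
        R.PiG (EuclideanSpace.single y 1 - R.μvec b)) : ℝ) : ℂ) +
      ((inner ℝ v (R.PiJ' (EuclideanSpace.single y 1 - R.μvec b)) : ℝ) : ℂ)))

/-- The main term of the one-user expansion:
`1 − (1/(2n))⟨u,Γ_b u⟩ + (1/n)Σ_{y∉D_b} α_b(y)(e^{i⟨v,j_{b,y}⟩} − 1)`. -/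
noncomputable def oneUserMain (R : Regime Y) (b : Fin 2) (n : ℕ)
    (u v : EuclideanSpace ℝ Y) : ℂ :=
  1 - (1 / (2 * (n : ℂ))) * ((R.gammaQuad b u : ℝ) : ℂ) +
    (1 / (n : ℂ)) * ∑ y ∈ (R.D b)ᶜ, ((R.α b y : ℝ) : ℂ) *
      (Complex.exp (Complex.I * ((inner ℝ v (R.jump b y) : ℝ) : ℂ)) - 1)

end Regime

section Aux
namespace Regime
variable {Y : Type*} [Fintype Y] [DecidableEq Y] (R : Regime Y)

lemma μvec_apply (b : Fin 2) (z : Y) :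
    R.μvec b z = if z ∈ R.D b then R.p b z else 0 := by
  unfold μvec
  rw [show ((∑ y ∈ R.D b, R.p b y • EuclideanSpace.single y (1:ℝ)) z)
      = ∑ y ∈ R.D b, (R.p b y • EuclideanSpace.single y (1:ℝ)) z from by rw [WithLp.ofLp_sum, Finset.sum_apply]]
  simp only [PiLp.smul_apply, EuclideanSpace.single_apply, smul_eq_mul, mul_ite, mul_one, mul_zero]
  rw [Finset.sum_ite_eq (R.D b) z (R.p b)]

lemma xvec_mem_tangent (b : Fin 2) {y : Y} (hy : y ∈ R.D b) :
    EuclideanSpace.single y (1:ℝ) - R.μvec b ∈ tangent (R.D b) := by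
  constructor
  · intro z hz
    show EuclideanSpace.single y (1:ℝ) z - R.μvec b z = 0
    rw [EuclideanSpace.single_apply, μvec_apply, if_neg hz, if_neg (by rintro rfl; exact hz hy),
      sub_zero]
  · show ∑ z ∈ R.D b, (EuclideanSpace.single y (1:ℝ) z - R.μvec b z) = 0
    have : ∀ z ∈ R.D b, EuclideanSpace.single y (1:ℝ) z - R.μvec b z
        = (if z = y then 1 else 0) - R.p b z := by
      intro z hz
      rw [EuclideanSpace.single_apply, μvec_apply, if_pos hz]
    rw [Finset.sum_congr rfl this, Finset.sum_sub_distrib,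
      Finset.sum_ite_eq' (R.D b) y (fun _ => (1:ℝ)), if_pos hy, R.p_sum b, sub_self]

lemma xvec_mem_M (b : Fin 2) {y : Y} (hy : y ∈ R.D b) :
    EuclideanSpace.single y (1:ℝ) - R.μvec b ∈ R.M := by
  have h := R.xvec_mem_tangent b hy
  unfold M
  fin_cases b
  · exact Submodule.mem_sup_left h
  · exact Submodule.mem_sup_right h

lemma PiG_of_mem {w : EuclideanSpace ℝ Y} (hw : w ∈ R.M) : R.PiG w = w :=
  Submodule.starProjection_eq_self_iff.mpr hw

lemma PiJ'_of_mem {w : EuclideanSpace ℝ Y} (hw : w ∈ R.M) : R.PiJ' w = 0 := by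
  rw [PiJ', R.PiG_of_mem hw, sub_self]

lemma norm_PiG_le (w : EuclideanSpace ℝ Y) : ‖R.PiG w‖ ≤ ‖w‖ := by
  have h := (Submodule.orthogonalProjectionOnto R.M).le_of_opNorm_le (Submodule.orthogonalProjectionOnto_norm_le R.M) w
  rw [one_mul] at h
  exact h

lemma norm_PiJ'_le (w : EuclideanSpace ℝ Y) : ‖R.PiJ' w‖ ≤ 2 * ‖w‖ := by
  calc ‖w - R.PiG w‖ ≤ ‖w‖ + ‖R.PiG w‖ := norm_sub_le _ _
  _ ≤ 2 * ‖w‖ := by have := R.norm_PiG_le w; linarith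

lemma sum_p_smul_xvec (b : Fin 2) :
    ∑ y ∈ R.D b, R.p b y • (EuclideanSpace.single y (1:ℝ) - R.μvec b) = 0 := by
  simp only [smul_sub]
  rw [Finset.sum_sub_distrib, ← Finset.sum_smul, R.p_sum b, one_smul, ← μvec, sub_self]

lemma sum_p_inner (b : Fin 2) (u : EuclideanSpace ℝ Y) :
    ∑ y ∈ R.D b, R.p b y * (inner ℝ u (EuclideanSpace.single y (1:ℝ) - R.μvec b) : ℝ) = 0 := by
  have : ∀ y ∈ R.D b, R.p b y * (inner ℝ u (EuclideanSpace.single y (1:ℝ) - R.μvec b) : ℝ)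
      = (inner ℝ u (R.p b y • (EuclideanSpace.single y (1:ℝ) - R.μvec b)) : ℝ) := by
    intro y _; rw [real_inner_smul_right]
  rw [Finset.sum_congr rfl this, ← inner_sum, R.sum_p_smul_xvec b, inner_zero_right]

end Regime
end Aux
/-- `n^{-1/2}`. -/
noncomputable def tauN (n : ℕ) : ℝ := (n : ℝ) ^ (-(1:ℝ)/2)

namespace Regime
variable {Y : Type*} [Fintype Y] [DecidableEq Y] (R : Regime Y)

/-- `x_y = e_y - μ_b`. -/
noncomputable def xv (b : Fin 2) (y : Y) : EuclideanSpace ℝ Y :=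
  EuclideanSpace.single y (1:ℝ) - R.μvec b

noncomputable def tC (b : Fin 2) (u : EuclideanSpace ℝ Y) (y : Y) : ℝ := inner ℝ u (R.xv b y)
noncomputable def sC (b : Fin 2) (u : EuclideanSpace ℝ Y) (y : Y) : ℝ := inner ℝ u (R.PiG (R.xv b y))
noncomputable def rC (b : Fin 2) (v : EuclideanSpace ℝ Y) (y : Y) : ℝ := inner ℝ v (R.PiJ' (R.xv b y))

lemma tauN_sq (n : ℕ) (hn : 1 ≤ n) : (tauN n) ^ 2 * (n : ℝ) = 1 := by
  have h0 : (0:ℝ) < (n:ℝ) := by exact_mod_cast hn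
  rw [tauN, ← Real.rpow_natCast ((n:ℝ) ^ (-(1:ℝ)/2)) 2, ← Real.rpow_mul h0.le]
  norm_num
  exact Real.rpow_neg_one (n:ℝ) ▸ inv_mul_cancel₀ h0.ne'

lemma decomp (b : Fin 2) (n : ℕ) (hn : 1 ≤ n) (u v : EuclideanSpace ℝ Y) :
    (n : ℂ) * (R.oneUserCF b n u v - R.oneUserMain b n u v) =
      (∑ y ∈ R.D b, (((n : ℝ) * R.W b n y : ℝ) : ℂ) *
        (Complex.exp (Complex.I * ((tauN n * R.tC b u y : ℝ) : ℂ)) -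
          (1 + Complex.I * ((tauN n * R.tC b u y : ℝ) : ℂ) +
            (Complex.I * ((tauN n * R.tC b u y : ℝ) : ℂ)) ^ 2 / 2)))
      + Complex.I * (((n : ℝ) * tauN n : ℝ) : ℂ) *
          (∑ y ∈ R.D b, (((R.W b n y - R.p b y) * R.tC b u y : ℝ) : ℂ))
      - (1 / 2 : ℂ) * (∑ y ∈ R.D b, (((R.W b n y - R.p b y) * (R.tC b u y) ^ 2 : ℝ) : ℂ))
      + (∑ y ∈ (R.D b)ᶜ, (((n : ℝ) * R.W b n y : ℝ) : ℂ) *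
          (Complex.exp (Complex.I * ((R.rC b v y : ℝ) : ℂ)) *
            (Complex.exp (Complex.I * ((tauN n * R.sC b u y : ℝ) : ℂ)) - 1)))
      + (∑ y ∈ (R.D b)ᶜ, (((n : ℝ) * R.W b n y - R.α b y : ℝ) : ℂ) *
          (Complex.exp (Complex.I * ((R.rC b v y : ℝ) : ℂ)) - 1)) := by
  have hnC : ((n : ℂ)) ≠ 0 := by exact_mod_cast Nat.cast_ne_zero.mpr (by omega)
  have hτ2 : ((tauN n : ℝ) : ℂ) ^ 2 * (n : ℂ) = 1 := by exact_mod_cast tauN_sq n hn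
  have hW1 : (∑ y ∈ R.D b, ((R.W b n y : ℝ) : ℂ)) + ∑ y ∈ (R.D b)ᶜ, ((R.W b n y : ℝ) : ℂ)
      = 1 := by
    rw [Finset.sum_add_sum_compl]
    rw [← Complex.ofReal_sum]
    exact_mod_cast congrArg Complex.ofReal (R.W_sum b n)
  have hCF : R.oneUserCF b n u v =
      (∑ y ∈ R.D b, ((R.W b n y : ℝ) : ℂ) *
        Complex.exp (Complex.I * ((tauN n * R.tC b u y : ℝ) : ℂ)))
      + ∑ y ∈ (R.D b)ᶜ, ((R.W b n y : ℝ) : ℂ) *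
          (Complex.exp (Complex.I * ((R.rC b v y : ℝ) : ℂ)) *
            Complex.exp (Complex.I * ((tauN n * R.sC b u y : ℝ) : ℂ))) := by
    rw [oneUserCF, ← Finset.sum_add_sum_compl (R.D b)]
    congr 1
    · refine Finset.sum_congr rfl fun y hy => ?_
      have hmem := R.xvec_mem_M b hy
      rw [show R.PiJ' (EuclideanSpace.single y 1 - R.μvec b) = 0 from R.PiJ'_of_mem hmem,
        show R.PiG (EuclideanSpace.single y 1 - R.μvec b)
          = EuclideanSpace.single y 1 - R.μvec b from R.PiG_of_mem hmem,
        inner_zero_right, real_inner_smul_right]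
      simp only [tC, xv, tauN, Complex.ofReal_zero, add_zero]
    · refine Finset.sum_congr rfl fun y hy => ?_
      rw [real_inner_smul_right]
      simp only [sC, rC, xv, tauN]
      rw [mul_add, Complex.exp_add]
      ring
  have hmain : R.oneUserMain b n u v =
      1 - (1 / (2 * (n : ℂ))) * (∑ y ∈ R.D b, ((R.p b y * (R.tC b u y) ^ 2 : ℝ) : ℂ))
        + (1 / (n : ℂ)) * ∑ y ∈ (R.D b)ᶜ, ((R.α b y : ℝ) : ℂ) *
            (Complex.exp (Complex.I * ((R.rC b v y : ℝ) : ℂ)) - 1) := by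
    rw [oneUserMain, gammaQuad]
    simp only [tC, rC, xv, jump, Complex.ofReal_sum, Complex.ofReal_mul, Complex.ofReal_pow]
  rw [hCF, hmain]
  have key1 :
      (∑ y ∈ R.D b, (((n : ℝ) * R.W b n y : ℝ) : ℂ) *
        (Complex.exp (Complex.I * ((tauN n * R.tC b u y : ℝ) : ℂ)) -
          (1 + Complex.I * ((tauN n * R.tC b u y : ℝ) : ℂ) +
            (Complex.I * ((tauN n * R.tC b u y : ℝ) : ℂ)) ^ 2 / 2)))
      + Complex.I * (((n : ℝ) * tauN n : ℝ) : ℂ) *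
          (∑ y ∈ R.D b, (((R.W b n y - R.p b y) * R.tC b u y : ℝ) : ℂ))
      - (1 / 2 : ℂ) * (∑ y ∈ R.D b, (((R.W b n y - R.p b y) * (R.tC b u y) ^ 2 : ℝ) : ℂ))
      = (n : ℂ) * (∑ y ∈ R.D b, ((R.W b n y : ℝ) : ℂ) *
          Complex.exp (Complex.I * ((tauN n * R.tC b u y : ℝ) : ℂ)))
        - (n : ℂ) * (∑ y ∈ R.D b, ((R.W b n y : ℝ) : ℂ))
        + (1 / 2 : ℂ) * (∑ y ∈ R.D b, ((R.p b y * (R.tC b u y) ^ 2 : ℝ) : ℂ))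
        - Complex.I * (((n : ℝ) * tauN n : ℝ) : ℂ) *
            (∑ y ∈ R.D b, ((R.p b y * R.tC b u y : ℝ) : ℂ)) := by
    simp only [Finset.mul_sum, ← Finset.sum_add_distrib, ← Finset.sum_sub_distrib]
    refine Finset.sum_congr rfl fun y hy => ?_
    push_cast
    linear_combination ((R.W b n y : ℂ) * ((R.tC b u y : ℝ):ℂ) ^ 2 / 2) * hτ2
      - ((n : ℂ) * (R.W b n y : ℂ) * ((tauN n : ℝ):ℂ) ^ 2 * ((R.tC b u y : ℝ):ℂ) ^ 2 / 2)
        * Complex.I_sq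
  have key2 :
      (∑ y ∈ (R.D b)ᶜ, (((n : ℝ) * R.W b n y : ℝ) : ℂ) *
          (Complex.exp (Complex.I * ((R.rC b v y : ℝ) : ℂ)) *
            (Complex.exp (Complex.I * ((tauN n * R.sC b u y : ℝ) : ℂ)) - 1)))
      + (∑ y ∈ (R.D b)ᶜ, (((n : ℝ) * R.W b n y - R.α b y : ℝ) : ℂ) *
          (Complex.exp (Complex.I * ((R.rC b v y : ℝ) : ℂ)) - 1))
      = (n : ℂ) * (∑ y ∈ (R.D b)ᶜ, ((R.W b n y : ℝ) : ℂ) *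
          (Complex.exp (Complex.I * ((R.rC b v y : ℝ) : ℂ)) *
            Complex.exp (Complex.I * ((tauN n * R.sC b u y : ℝ) : ℂ))))
        - (n : ℂ) * (∑ y ∈ (R.D b)ᶜ, ((R.W b n y : ℝ) : ℂ))
        - ∑ y ∈ (R.D b)ᶜ, ((R.α b y : ℝ) : ℂ) *
            (Complex.exp (Complex.I * ((R.rC b v y : ℝ) : ℂ)) - 1) := by
    simp only [Finset.mul_sum, ← Finset.sum_add_distrib, ← Finset.sum_sub_distrib]
    refine Finset.sum_congr rfl fun y hy => ?_
    push_cast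
    ring
  have hz : (∑ y ∈ R.D b, ((R.p b y * R.tC b u y : ℝ) : ℂ)) = 0 := by
    rw [← Complex.ofReal_sum]
    simp only [tC, xv]
    rw [R.sum_p_inner b u, Complex.ofReal_zero]
  have hdiv1 : (n : ℂ) * (1 / (2 * (n : ℂ))) = 1 / 2 := by
    rw [mul_one_div, div_eq_div_iff (by simpa using hnC) two_ne_zero]; ring
  have hdiv2 : (n : ℂ) * (1 / (n : ℂ)) = 1 := by
    rw [mul_one_div, div_self hnC]
  linear_combination (-1 : ℂ) * key1 - key2 + (n : ℂ) * hW1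
    + Complex.I * (((n : ℝ) * tauN n : ℝ) : ℂ) * hz
    + (∑ y ∈ R.D b, ((R.p b y * (R.tC b u y) ^ 2 : ℝ) : ℂ)) * hdiv1
    - (∑ y ∈ (R.D b)ᶜ, ((R.α b y : ℝ) : ℂ) *
        (Complex.exp (Complex.I * ((R.rC b v y : ℝ) : ℂ)) - 1)) * hdiv2
end Regime
section ExpBounds

lemma expI_norm (r : ℝ) : ‖Complex.exp (Complex.I * r)‖ = 1 := by
  rw [mul_comm]; exact Complex.norm_exp_ofReal_mul_I r

lemma expI_sub_one_norm_le_two (r : ℝ) : ‖Complex.exp (Complex.I * r) - 1‖ ≤ 2 := by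
  calc ‖Complex.exp (Complex.I * r) - 1‖ ≤ ‖Complex.exp (Complex.I * r)‖ + ‖(1:ℂ)‖ :=
        norm_sub_le _ _
  _ ≤ 2 := by rw [expI_norm, norm_one]; norm_num

lemma absIθ (θ : ℝ) : ‖Complex.I * θ‖ = |θ| := by
  rw [norm_mul, Complex.norm_I, Complex.norm_real, Real.norm_eq_abs, one_mul]

lemma expI_sub_one_norm_le (θ : ℝ) (h : |θ| ≤ 1) :
    ‖Complex.exp (Complex.I * θ) - 1‖ ≤ 2 * |θ| := by
  have := Complex.norm_exp_sub_one_le (x := Complex.I * θ) (by rw [absIθ]; exact h)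
  rwa [absIθ] at this

lemma expI_taylor3 (θ : ℝ) (h : |θ| ≤ 1) :
    ‖Complex.exp (Complex.I * θ) -
      (1 + Complex.I * θ + (Complex.I * θ) ^ 2 / 2)‖ ≤ |θ| ^ 3 / 3 := by
  have h3 : (1 + Complex.I * θ + (Complex.I * θ) ^ 2 / 2 : ℂ)
      = ∑ m ∈ Finset.range 3, (Complex.I * θ) ^ m / m.factorial := by
    norm_num [Finset.sum_range_succ, Nat.factorial]
    try ring
  rw [h3]
  refine le_trans (Complex.exp_bound' ?_) ?_
  · rw [absIθ]
    have h4 : ((Nat.succ 3 : ℕ) : ℝ) = 4 := by norm_num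
    rw [h4]
    linarith
  · rw [absIθ]
    have h6 : ((Nat.factorial 3 : ℕ) : ℝ) = 6 := by norm_num [Nat.factorial]
    rw [h6]
    exact le_of_eq (by ring)

end ExpBounds

namespace Regime
variable {Y : Type*} [Fintype Y] [DecidableEq Y] (R : Regime Y)

open Filter in
lemma keybound (b : Fin 2) (K : Set (EuclideanSpace ℝ Y × EuclideanSpace ℝ Y))
    (hK : IsCompact K) :
    ∃ A : ℕ → ℝ, Tendsto A atTop (nhds 0) ∧
      ∀ᶠ n : ℕ in atTop, ∀ uv ∈ K,
        ‖(n : ℂ) * (R.oneUserCF b n uv.1 uv.2 - R.oneUserMain b n uv.1 uv.2)‖ ≤ A n := by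
  obtain ⟨C₀, hC₀⟩ := hK.isBounded.exists_norm_le
  set C : ℝ := max C₀ 0 + 1 with hCdef
  have hC1 : 1 ≤ C := by
    have : (0:ℝ) ≤ max C₀ 0 := le_max_right _ _
    simp only [hCdef]; linarith
  set Mx : ℝ := (∑ y, ‖R.xv b y‖) + 1 with hMxdef
  have hMx1 : 1 ≤ Mx := by
    have : (0:ℝ) ≤ ∑ y, ‖R.xv b y‖ := Finset.sum_nonneg fun y _ => norm_nonneg _
    simp only [hMxdef]; linarith
  have hxvle : ∀ y, ‖R.xv b y‖ ≤ Mx := by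
    intro y
    have := Finset.single_le_sum (f := fun y => ‖R.xv b y‖)
      (fun i _ => norm_nonneg _) (Finset.mem_univ y)
    simp only [hMxdef]; linarith
  set B : ℝ := C * Mx with hBdef
  have hB1 : 1 ≤ B := le_trans hC1 (le_mul_of_one_le_right (by linarith) hMx1)
  have hBpos : (0:ℝ) < B := by linarith
  obtain ⟨CW₀, hCW₀⟩ := R.W_dom b
  set CW : ℝ := max CW₀ 0 with hCWdef
  have hCWnn : 0 ≤ CW := le_max_right _ _
  have hCW : ∀ y ∈ R.D b, ∀ n : ℕ, 1 ≤ n → |R.W b n y - R.p b y| ≤ CW / n := by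
    intro y hy n hn
    refine le_trans (hCW₀ y hy n hn) ?_
    have hn0 : (0:ℝ) < n := by exact_mod_cast hn
    gcongr
    exact le_max_left _ _
  set S : ℕ → ℝ := fun n => ∑ y ∈ (R.D b)ᶜ, (n:ℝ) * R.W b n y with hSdef
  set T : ℕ → ℝ := fun n => ∑ y ∈ (R.D b)ᶜ, |(n:ℝ) * R.W b n y - R.α b y| with hTdef
  have htau0 : Tendsto (fun n : ℕ => tauN n) atTop (nhds 0) := by
    have h := (tendsto_rpow_neg_atTop (y := 1/2) (by norm_num)).comp
      tendsto_natCast_atTop_atTop (α := ℕ)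
    simpa [tauN, Function.comp_def, neg_div] using h
  have hS : Tendsto S atTop (nhds (∑ y ∈ (R.D b)ᶜ, R.α b y)) :=
    tendsto_finset_sum _ fun y hy => R.W_rare b y (Finset.mem_compl.mp hy)
  have hT : Tendsto T atTop (nhds 0) := by
    have h : ∀ y ∈ (R.D b)ᶜ,
        Tendsto (fun n : ℕ => |(n:ℝ) * R.W b n y - R.α b y|) atTop (nhds 0) := by
      intro y hy
      simpa using ((R.W_rare b y (Finset.mem_compl.mp hy)).sub_const (R.α b y)).abs
    simpa using tendsto_finset_sum _ h
  refine ⟨fun n => B^3/3 * tauN n + CW * B * (Fintype.card Y) * tauN n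
      + CW * B^2 * (Fintype.card Y) / 2 / n + 2 * B * tauN n * S n + 2 * T n, ?_, ?_⟩
  · have h1 := htau0.const_mul (B^3/3)
    have h2 := htau0.const_mul (CW * B * (Fintype.card Y))
    have h3 := tendsto_const_div_atTop_nhds_zero_nat (CW * B^2 * (Fintype.card Y) / 2)
    have h4 := (htau0.const_mul (2*B)).mul hS
    have h5 := hT.const_mul 2
    have := (((h1.add h2).add h3).add h4).add h5
    simpa using this
  · filter_upwards [eventually_ge_atTop 1,
      htau0.eventually (gt_mem_nhds (show (0:ℝ) < 1/B by positivity))] with n hn1 hτsm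
    intro uv huv
    have hτnn : 0 ≤ tauN n := Real.rpow_nonneg (Nat.cast_nonneg n) _
    have hτB : tauN n * B ≤ 1 := by
      calc tauN n * B ≤ (1/B) * B := mul_le_mul_of_nonneg_right hτsm.le hBpos.le
      _ = 1 := by field_simp
    have hτ2 := tauN_sq n hn1
    have hnpos : (0:ℝ) < n := by exact_mod_cast hn1
    have hu : ‖uv.1‖ ≤ C := by
      have := le_trans (norm_fst_le uv) (hC₀ uv huv)
      have h2 : C₀ ≤ max C₀ 0 := le_max_left _ _
      simp only [hCdef]; linarith
    have hv : ‖uv.2‖ ≤ C := by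
      have := le_trans (norm_snd_le uv) (hC₀ uv huv)
      have h2 : C₀ ≤ max C₀ 0 := le_max_left _ _
      simp only [hCdef]; linarith
    have ht : ∀ y, |R.tC b uv.1 y| ≤ B := by
      intro y
      calc |R.tC b uv.1 y| ≤ ‖uv.1‖ * ‖R.xv b y‖ := abs_real_inner_le_norm _ _
      _ ≤ C * Mx := mul_le_mul hu (hxvle y) (norm_nonneg _) (by linarith)
    have hs : ∀ y, |R.sC b uv.1 y| ≤ B := by
      intro y
      calc |R.sC b uv.1 y| ≤ ‖uv.1‖ * ‖R.PiG (R.xv b y)‖ := abs_real_inner_le_norm _ _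
      _ ≤ C * Mx :=
        mul_le_mul hu (le_trans (R.norm_PiG_le _) (hxvle y)) (norm_nonneg _) (by linarith)
    have hθt : ∀ y, |tauN n * R.tC b uv.1 y| ≤ 1 := by
      intro y
      rw [abs_mul, abs_of_nonneg hτnn]
      calc tauN n * |R.tC b uv.1 y| ≤ tauN n * B := by gcongr; exact ht y
      _ ≤ 1 := hτB
    have hθs : ∀ y, |tauN n * R.sC b uv.1 y| ≤ 1 := by
      intro y
      rw [abs_mul, abs_of_nonneg hτnn]
      calc tauN n * |R.sC b uv.1 y| ≤ tauN n * B := by gcongr; exact hs y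
      _ ≤ 1 := hτB
    have hWnn : ∀ y, 0 ≤ R.W b n y := fun y => R.W_nonneg b n y
    have hWD1 : ∑ y ∈ R.D b, R.W b n y ≤ 1 := by
      rw [← R.W_sum b n]
      exact Finset.sum_le_sum_of_subset_of_nonneg (Finset.subset_univ _)
        fun y _ _ => hWnn y
    rw [R.decomp b n hn1 uv.1 uv.2]
    -- Term-by-term bounds
    have bnd1 : ‖∑ y ∈ R.D b, (((n : ℝ) * R.W b n y : ℝ) : ℂ) *
        (Complex.exp (Complex.I * ((tauN n * R.tC b uv.1 y : ℝ) : ℂ)) -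
          (1 + Complex.I * ((tauN n * R.tC b uv.1 y : ℝ) : ℂ) +
            (Complex.I * ((tauN n * R.tC b uv.1 y : ℝ) : ℂ)) ^ 2 / 2))‖
        ≤ B^3/3 * tauN n := by
      refine le_trans (norm_sum_le _ _) ?_
      have hterm : ∀ y ∈ R.D b, ‖(((n : ℝ) * R.W b n y : ℝ) : ℂ) *
          (Complex.exp (Complex.I * ((tauN n * R.tC b uv.1 y : ℝ) : ℂ)) -
            (1 + Complex.I * ((tauN n * R.tC b uv.1 y : ℝ) : ℂ) +
              (Complex.I * ((tauN n * R.tC b uv.1 y : ℝ) : ℂ)) ^ 2 / 2))‖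
          ≤ R.W b n y * (B^3/3 * tauN n) := by
        intro y hy
        rw [norm_mul, Complex.norm_real, Real.norm_eq_abs,
          abs_of_nonneg (mul_nonneg (Nat.cast_nonneg n) (hWnn y))]
        calc (n:ℝ) * R.W b n y * ‖_‖ ≤ (n:ℝ) * R.W b n y *
            (|tauN n * R.tC b uv.1 y| ^ 3 / 3) := by
              have hnw := mul_nonneg (Nat.cast_nonneg (α := ℝ) n) (hWnn y)
              have := expI_taylor3 (tauN n * R.tC b uv.1 y) (hθt y)
              gcongr
        _ = R.W b n y * (tauN n * |R.tC b uv.1 y| ^ 3 / 3) * (tauN n ^ 2 * n) := by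
              rw [abs_mul, abs_of_nonneg hτnn]; ring
        _ = R.W b n y * (tauN n * |R.tC b uv.1 y| ^ 3 / 3) := by rw [hτ2, mul_one]
        _ ≤ R.W b n y * (tauN n * B ^ 3 / 3) := by
              have h1 := ht y
              have h2 := abs_nonneg (R.tC b uv.1 y)
              have h3 := hWnn y
              gcongr
        _ = R.W b n y * (B^3/3 * tauN n) := by ring
      refine le_trans (Finset.sum_le_sum hterm) ?_
      rw [← Finset.sum_mul]
      calc (∑ y ∈ R.D b, R.W b n y) * (B^3/3 * tauN n) ≤ 1 * (B^3/3 * tauN n) := by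
            have hc : 0 ≤ B^3/3 * tauN n := by positivity
            exact mul_le_mul_of_nonneg_right hWD1 hc
      _ = B^3/3 * tauN n := one_mul _
    have hcard : ((R.D b).card : ℝ) ≤ (Fintype.card Y : ℝ) := by
      exact_mod_cast Finset.card_le_univ (R.D b)
    have hnτnn : 0 ≤ (n:ℝ) * tauN n := mul_nonneg (Nat.cast_nonneg n) hτnn
    have bnd2 : ‖Complex.I * (((n : ℝ) * tauN n : ℝ) : ℂ) *
        (∑ y ∈ R.D b, (((R.W b n y - R.p b y) * R.tC b uv.1 y : ℝ) : ℂ))‖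
        ≤ CW * B * (Fintype.card Y) * tauN n := by
      rw [norm_mul, norm_mul, Complex.norm_I, one_mul, Complex.norm_real,
        Real.norm_eq_abs, abs_of_nonneg hnτnn]
      have hsum : ‖∑ y ∈ R.D b, (((R.W b n y - R.p b y) * R.tC b uv.1 y : ℝ) : ℂ)‖
          ≤ (R.D b).card * (CW / n * B) := by
        refine le_trans (norm_sum_le _ _) ?_
        have hterm : ∀ y ∈ R.D b,
            ‖(((R.W b n y - R.p b y) * R.tC b uv.1 y : ℝ) : ℂ)‖ ≤ CW / n * B := by
          intro y hy
          rw [Complex.norm_real, Real.norm_eq_abs, abs_mul]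
          exact mul_le_mul (hCW y hy n hn1) (ht y) (abs_nonneg _)
            (div_nonneg hCWnn (Nat.cast_nonneg n))
        refine le_trans (Finset.sum_le_sum hterm) ?_
        rw [Finset.sum_const, nsmul_eq_mul]
      calc (n:ℝ) * tauN n * ‖∑ y ∈ R.D b, (((R.W b n y - R.p b y) * R.tC b uv.1 y : ℝ) : ℂ)‖
          ≤ (n:ℝ) * tauN n * ((R.D b).card * (CW / n * B)) :=
            mul_le_mul_of_nonneg_left hsum hnτnn
      _ = CW * B * (R.D b).card * tauN n := by field_simp
      _ ≤ CW * B * (Fintype.card Y) * tauN n := by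
            have h1 : 0 ≤ CW * B := mul_nonneg hCWnn hBpos.le
            gcongr
    have bnd3 : ‖(1 / 2 : ℂ) *
        (∑ y ∈ R.D b, (((R.W b n y - R.p b y) * (R.tC b uv.1 y) ^ 2 : ℝ) : ℂ))‖
        ≤ CW * B^2 * (Fintype.card Y) / 2 / n := by
      rw [norm_mul]
      have h12 : ‖(1/2 : ℂ)‖ = 1/2 := by norm_num
      rw [h12]
      have hsum : ‖∑ y ∈ R.D b, (((R.W b n y - R.p b y) * (R.tC b uv.1 y) ^ 2 : ℝ) : ℂ)‖
          ≤ (R.D b).card * (CW / n * B ^ 2) := by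
        refine le_trans (norm_sum_le _ _) ?_
        have hterm : ∀ y ∈ R.D b,
            ‖(((R.W b n y - R.p b y) * (R.tC b uv.1 y) ^ 2 : ℝ) : ℂ)‖ ≤ CW / n * B ^ 2 := by
          intro y hy
          rw [Complex.norm_real, Real.norm_eq_abs, abs_mul]
          have h2 : |(R.tC b uv.1 y) ^ 2| ≤ B ^ 2 := by
            rw [abs_pow]
            exact pow_le_pow_left₀ (abs_nonneg _) (ht y) 2
          exact mul_le_mul (hCW y hy n hn1) h2 (abs_nonneg _)
            (div_nonneg hCWnn (Nat.cast_nonneg n))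
        refine le_trans (Finset.sum_le_sum hterm) ?_
        rw [Finset.sum_const, nsmul_eq_mul]
      calc (1:ℝ)/2 * ‖∑ y ∈ R.D b, (((R.W b n y - R.p b y) * (R.tC b uv.1 y) ^ 2 : ℝ) : ℂ)‖
          ≤ 1/2 * ((R.D b).card * (CW / n * B ^ 2)) :=
            mul_le_mul_of_nonneg_left hsum (by norm_num)
      _ ≤ 1/2 * ((Fintype.card Y : ℝ) * (CW / n * B ^ 2)) := by
            have h1 : 0 ≤ CW / (n:ℝ) * B ^ 2 :=
              mul_nonneg (div_nonneg hCWnn (Nat.cast_nonneg n)) (by positivity)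
            gcongr
      _ = CW * B^2 * (Fintype.card Y) / 2 / n := by field_simp
    have bnd4 : ‖∑ y ∈ (R.D b)ᶜ, (((n : ℝ) * R.W b n y : ℝ) : ℂ) *
          (Complex.exp (Complex.I * ((R.rC b uv.2 y : ℝ) : ℂ)) *
            (Complex.exp (Complex.I * ((tauN n * R.sC b uv.1 y : ℝ) : ℂ)) - 1))‖
        ≤ 2 * B * tauN n * S n := by
      refine le_trans (norm_sum_le _ _) ?_
      have hterm : ∀ y ∈ (R.D b)ᶜ, ‖(((n : ℝ) * R.W b n y : ℝ) : ℂ) *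
          (Complex.exp (Complex.I * ((R.rC b uv.2 y : ℝ) : ℂ)) *
            (Complex.exp (Complex.I * ((tauN n * R.sC b uv.1 y : ℝ) : ℂ)) - 1))‖
          ≤ (n:ℝ) * R.W b n y * (2 * B * tauN n) := by
        intro y hy
        rw [norm_mul, norm_mul, Complex.norm_real, Real.norm_eq_abs,
          abs_of_nonneg (mul_nonneg (Nat.cast_nonneg n) (hWnn y)), expI_norm, one_mul]
        have hle : ‖Complex.exp (Complex.I * ((tauN n * R.sC b uv.1 y : ℝ) : ℂ)) - 1‖
            ≤ 2 * B * tauN n := by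
          refine le_trans (expI_sub_one_norm_le _ (hθs y)) ?_
          rw [abs_mul, abs_of_nonneg hτnn]
          calc 2 * (tauN n * |R.sC b uv.1 y|) ≤ 2 * (tauN n * B) := by
                have := hs y
                gcongr
          _ = 2 * B * tauN n := by ring
        exact mul_le_mul_of_nonneg_left hle
          (mul_nonneg (Nat.cast_nonneg n) (hWnn y))
      refine le_trans (Finset.sum_le_sum hterm) ?_
      rw [← Finset.sum_mul]
      simp only [hSdef]
      exact le_of_eq (by ring)
    have bnd5 : ‖∑ y ∈ (R.D b)ᶜ, (((n : ℝ) * R.W b n y - R.α b y : ℝ) : ℂ) *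
          (Complex.exp (Complex.I * ((R.rC b uv.2 y : ℝ) : ℂ)) - 1)‖
        ≤ 2 * T n := by
      refine le_trans (norm_sum_le _ _) ?_
      have hterm : ∀ y ∈ (R.D b)ᶜ, ‖(((n : ℝ) * R.W b n y - R.α b y : ℝ) : ℂ) *
          (Complex.exp (Complex.I * ((R.rC b uv.2 y : ℝ) : ℂ)) - 1)‖
          ≤ |(n:ℝ) * R.W b n y - R.α b y| * 2 := by
        intro y hy
        rw [norm_mul, Complex.norm_real, Real.norm_eq_abs]
        exact mul_le_mul_of_nonneg_left (expI_sub_one_norm_le_two _) (abs_nonneg _)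
      refine le_trans (Finset.sum_le_sum hterm) ?_
      rw [← Finset.sum_mul]
      simp only [hTdef]
      exact le_of_eq (by ring)
    refine le_trans (norm_add_le _ _)
      (add_le_add (le_trans (norm_add_le _ _)
        (add_le_add (le_trans (norm_sub_le _ _)
          (add_le_add (le_trans (norm_add_le _ _)
            (add_le_add bnd1 bnd2)) bnd3)) bnd4)) bnd5)
end Regime
namespace Regime
variable {Y : Type*} [Fintype Y] [DecidableEq Y] (R : Regime Y)

lemma mainbound (b : Fin 2) (K : Set (EuclideanSpace ℝ Y × EuclideanSpace ℝ Y))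
    (hK : IsCompact K) :
    ∃ c : ℝ, 0 ≤ c ∧ ∀ n : ℕ, 1 ≤ n → ∀ uv ∈ K,
      ‖R.oneUserMain b n uv.1 uv.2 - 1‖ ≤ c / n := by
  obtain ⟨C₀, hC₀⟩ := hK.isBounded.exists_norm_le
  set C : ℝ := max C₀ 0 + 1 with hCdef
  have hC1 : 1 ≤ C := by
    have : (0:ℝ) ≤ max C₀ 0 := le_max_right _ _
    simp only [hCdef]; linarith
  set Mx : ℝ := (∑ y, ‖R.xv b y‖) + 1 with hMxdef
  have hMx1 : 1 ≤ Mx := by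
    have : (0:ℝ) ≤ ∑ y, ‖R.xv b y‖ := Finset.sum_nonneg fun y _ => norm_nonneg _
    simp only [hMxdef]; linarith
  have hxvle : ∀ y, ‖R.xv b y‖ ≤ Mx := by
    intro y
    have := Finset.single_le_sum (f := fun y => ‖R.xv b y‖)
      (fun i _ => norm_nonneg _) (Finset.mem_univ y)
    simp only [hMxdef]; linarith
  set B : ℝ := C * Mx with hBdef
  have hB1 : 1 ≤ B := le_trans hC1 (le_mul_of_one_le_right (by linarith) hMx1)
  have hαnn : (0:ℝ) ≤ ∑ y ∈ (R.D b)ᶜ, R.α b y :=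
    Finset.sum_nonneg fun y _ => R.α_nonneg b y
  refine ⟨B^2/2 + 2 * ∑ y ∈ (R.D b)ᶜ, R.α b y, by positivity, ?_⟩
  intro n hn uv huv
  have hnpos : (0:ℝ) < n := by exact_mod_cast hn
  have hu : ‖uv.1‖ ≤ C := by
    have := le_trans (norm_fst_le uv) (hC₀ uv huv)
    have h2 : C₀ ≤ max C₀ 0 := le_max_left _ _
    simp only [hCdef]; linarith
  have ht : ∀ y, |R.tC b uv.1 y| ≤ B := by
    intro y
    calc |R.tC b uv.1 y| ≤ ‖uv.1‖ * ‖R.xv b y‖ := abs_real_inner_le_norm _ _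
    _ ≤ C * Mx := mul_le_mul hu (hxvle y) (norm_nonneg _) (by linarith)
  have hγnn : 0 ≤ R.gammaQuad b uv.1 :=
    Finset.sum_nonneg fun y hy => mul_nonneg (R.p_pos b y hy).le (sq_nonneg _)
  have hγle : R.gammaQuad b uv.1 ≤ B^2 := by
    rw [gammaQuad]
    have hterm : ∀ y ∈ R.D b, R.p b y *
        (inner ℝ uv.1 (EuclideanSpace.single y 1 - R.μvec b) : ℝ) ^ 2 ≤ R.p b y * B^2 := by
      intro y hy
      refine mul_le_mul_of_nonneg_left ?_ (R.p_pos b y hy).le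
      calc (inner ℝ uv.1 (EuclideanSpace.single y 1 - R.μvec b) : ℝ) ^ 2
          = |R.tC b uv.1 y| ^ 2 := by rw [sq_abs]; rfl
      _ ≤ B ^ 2 := pow_le_pow_left₀ (abs_nonneg _) (ht y) 2
    refine le_trans (Finset.sum_le_sum hterm) ?_
    rw [← Finset.sum_mul, R.p_sum b, one_mul]
  have hsplit : R.oneUserMain b n uv.1 uv.2 - 1 =
      -((1 / (2 * (n : ℂ))) * ((R.gammaQuad b uv.1 : ℝ) : ℂ)) +
        (1 / (n : ℂ)) * ∑ y ∈ (R.D b)ᶜ, ((R.α b y : ℝ) : ℂ) *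
          (Complex.exp (Complex.I * ((inner ℝ uv.2 (R.jump b y) : ℝ) : ℂ)) - 1) := by
    rw [oneUserMain]; ring
  rw [hsplit]
  have h2n : ‖(1 / (2 * (n : ℂ)))‖ = 1 / (2 * n) := by
    rw [norm_div, norm_one, norm_mul, Complex.norm_natCast]
    norm_num
  have h1n : ‖(1 / ((n : ℂ)))‖ = 1 / n := by
    rw [norm_div, norm_one, Complex.norm_natCast]
  have hA : ‖(1 / (2 * (n : ℂ))) * ((R.gammaQuad b uv.1 : ℝ) : ℂ)‖ ≤ B^2 / (2 * n) := by
    rw [norm_mul, h2n, Complex.norm_real, Real.norm_eq_abs, abs_of_nonneg hγnn]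
    rw [div_mul_eq_mul_div, one_mul]
    exact div_le_div_of_nonneg_right hγle (by positivity) |>.trans_eq (by ring)
  have hB2 : ‖(1 / ((n : ℂ))) * ∑ y ∈ (R.D b)ᶜ, ((R.α b y : ℝ) : ℂ) *
      (Complex.exp (Complex.I * ((inner ℝ uv.2 (R.jump b y) : ℝ) : ℂ)) - 1)‖
      ≤ (2 * ∑ y ∈ (R.D b)ᶜ, R.α b y) / n := by
    rw [norm_mul, h1n]
    have hsum : ‖∑ y ∈ (R.D b)ᶜ, ((R.α b y : ℝ) : ℂ) *
        (Complex.exp (Complex.I * ((inner ℝ uv.2 (R.jump b y) : ℝ) : ℂ)) - 1)‖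
        ≤ 2 * ∑ y ∈ (R.D b)ᶜ, R.α b y := by
      refine le_trans (norm_sum_le _ _) ?_
      have hterm : ∀ y ∈ (R.D b)ᶜ, ‖((R.α b y : ℝ) : ℂ) *
          (Complex.exp (Complex.I * ((inner ℝ uv.2 (R.jump b y) : ℝ) : ℂ)) - 1)‖
          ≤ R.α b y * 2 := by
        intro y hy
        rw [norm_mul, Complex.norm_real, Real.norm_eq_abs, abs_of_nonneg (R.α_nonneg b y)]
        exact mul_le_mul_of_nonneg_left (expI_sub_one_norm_le_two _) (R.α_nonneg b y)
      refine le_trans (Finset.sum_le_sum hterm) ?_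
      rw [← Finset.sum_mul]
      exact le_of_eq (by ring)
    calc 1 / (n:ℝ) * ‖_‖ ≤ 1 / (n:ℝ) * (2 * ∑ y ∈ (R.D b)ᶜ, R.α b y) :=
        mul_le_mul_of_nonneg_left hsum (by positivity)
    _ = (2 * ∑ y ∈ (R.D b)ᶜ, R.α b y) / n := by ring
  calc ‖-((1 / (2 * (n : ℂ))) * ((R.gammaQuad b uv.1 : ℝ) : ℂ)) + _‖
      ≤ ‖(1 / (2 * (n : ℂ))) * ((R.gammaQuad b uv.1 : ℝ) : ℂ)‖ + ‖_‖ := by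
        refine le_trans (norm_add_le _ _) ?_
        rw [norm_neg]
  _ ≤ B^2 / (2 * n) + (2 * ∑ y ∈ (R.D b)ᶜ, R.α b y) / n := add_le_add hA hB2
  _ = (B^2/2 + 2 * ∑ y ∈ (R.D b)ᶜ, R.α b y) / n := by field_simp

end Regime

open Regime in
/-- One-user characteristic expansion (Lemma A.2): uniformly on compact subsets of
`M × M^⊥`, `φ_{b,n}(u,v) = 1 − (1/(2n))⟨u,Γ_b u⟩ + (1/n)Σ_{y∉D_b} α_b(y)(e^{i⟨v,j_{b,y}⟩}−1)
+ o(n⁻¹)`, and consequently the same expansion holds for `log φ_{b,n}(u,v)` without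
the leading `1`. -/
theorem one_user_char_expansion
    {Y : Type*} [Fintype Y] [DecidableEq Y] (R : Regime Y) (b : Fin 2)
    (K : Set (EuclideanSpace ℝ Y × EuclideanSpace ℝ Y)) (hK : IsCompact K)
    (hKM : ∀ uv ∈ K, uv.1 ∈ R.M ∧ uv.2 ∈ R.Mᗮ) :
    TendstoUniformlyOn
      (fun (n : ℕ) (uv : EuclideanSpace ℝ Y × EuclideanSpace ℝ Y) =>
        (n : ℂ) * (R.oneUserCF b n uv.1 uv.2 - R.oneUserMain b n uv.1 uv.2))
      0 atTop K ∧
    TendstoUniformlyOn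
      (fun (n : ℕ) (uv : EuclideanSpace ℝ Y × EuclideanSpace ℝ Y) =>
        (n : ℂ) * (Complex.log (R.oneUserCF b n uv.1 uv.2) -
          (R.oneUserMain b n uv.1 uv.2 - 1)))
      0 atTop K := by
  obtain ⟨A, hA, hbound⟩ := R.keybound b K hK
  obtain ⟨c, hc0, hcb⟩ := R.mainbound b K hK
  constructor
  · rw [Metric.tendstoUniformlyOn_iff]
    intro ε hε
    filter_upwards [hbound, hA.eventually (gt_mem_nhds hε)] with n h1 h2 uv huv
    rw [Pi.zero_apply, dist_zero_left]
    exact lt_of_le_of_lt (h1 uv huv) h2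
  · rw [Metric.tendstoUniformlyOn_iff]
    intro ε hε
    have hε2 : (0:ℝ) < ε/2 := by linarith
    filter_upwards [hbound,
      hA.eventually (gt_mem_nhds (show (0:ℝ) < min 1 (ε/2) by positivity)),
      (tendsto_const_div_atTop_nhds_zero_nat ((c+1)^2)).eventually (gt_mem_nhds hε2),
      (tendsto_const_div_atTop_nhds_zero_nat (c+1)).eventually
        (gt_mem_nhds (show (0:ℝ) < 1/2 by norm_num)),
      eventually_ge_atTop 1] with n h1 h2 h3 h4 hn1
    intro uv huv
    have hnpos : (0:ℝ) < n := by exact_mod_cast hn1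
    set z : ℂ := R.oneUserCF b n uv.1 uv.2 - 1 with hzdef
    have hd : ‖R.oneUserCF b n uv.1 uv.2 - R.oneUserMain b n uv.1 uv.2‖ ≤ A n / n := by
      have h := h1 uv huv
      rw [norm_mul, Complex.norm_natCast] at h
      rw [le_div_iff₀ hnpos]
      linarith [h]
    have hA1 : A n ≤ 1 := le_trans h2.le (min_le_left _ _)
    have hz1 : ‖z‖ ≤ (c+1)/n := by
      have hsplit : z = (R.oneUserCF b n uv.1 uv.2 - R.oneUserMain b n uv.1 uv.2) +
          (R.oneUserMain b n uv.1 uv.2 - 1) := by rw [hzdef]; ring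
      calc ‖z‖ ≤ ‖R.oneUserCF b n uv.1 uv.2 - R.oneUserMain b n uv.1 uv.2‖ +
            ‖R.oneUserMain b n uv.1 uv.2 - 1‖ := by rw [hsplit]; exact norm_add_le _ _
      _ ≤ A n / n + c / n := add_le_add hd (hcb n hn1 uv huv)
      _ ≤ 1 / n + c / n := by gcongr
      _ = (c+1)/n := by ring
    have hz2 : ‖z‖ ≤ 1/2 := le_trans hz1 h4.le
    have hzlt1 : ‖z‖ < 1 := lt_of_le_of_lt hz2 (by norm_num)
    have hlog : Complex.log (R.oneUserCF b n uv.1 uv.2) = Complex.log (1 + z) := by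
      congr 1
      rw [hzdef]; ring
    have hlogb := Complex.norm_log_one_add_sub_self_le hzlt1
    have hinv : (1 - ‖z‖)⁻¹ ≤ 2 := by
      have h5 : (1:ℝ)/2 ≤ 1 - ‖z‖ := by linarith
      calc (1 - ‖z‖)⁻¹ ≤ ((1:ℝ)/2)⁻¹ := by
            apply inv_anti₀ (by norm_num) h5
      _ = 2 := by norm_num
    have hlz : ‖Complex.log (1+z) - z‖ ≤ ((c+1)/n)^2 := by
      refine le_trans hlogb ?_
      have hp : ‖z‖^2 ≤ ((c+1)/n)^2 := pow_le_pow_left₀ (norm_nonneg z) hz1 2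
      have hq : (0:ℝ) ≤ (1 - ‖z‖)⁻¹ := inv_nonneg.mpr (by linarith)
      have := mul_le_mul hp hinv hq (sq_nonneg ((c+1)/(n:ℝ)))
      linarith
    have hkey : Complex.log (R.oneUserCF b n uv.1 uv.2) -
        (R.oneUserMain b n uv.1 uv.2 - 1) = (Complex.log (1+z) - z) +
          (R.oneUserCF b n uv.1 uv.2 - R.oneUserMain b n uv.1 uv.2) := by
      rw [hlog, hzdef]; ring
    rw [Pi.zero_apply, dist_zero_left, norm_mul, Complex.norm_natCast, hkey]
    calc (n:ℝ) * ‖(Complex.log (1+z) - z) +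
          (R.oneUserCF b n uv.1 uv.2 - R.oneUserMain b n uv.1 uv.2)‖
        ≤ (n:ℝ) * (((c+1)/n)^2 + A n / n) := by
          refine mul_le_mul_of_nonneg_left ?_ hnpos.le
          exact le_trans (norm_add_le _ _) (add_le_add hlz hd)
    _ = (c+1)^2/n + A n := by field_simp
    _ < ε/2 + ε/2 := by
          have hA2 : A n < ε/2 := lt_of_lt_of_le h2 (min_le_right _ _)
          exact add_lt_add h3 hA2
    _ = ε := by ring
end

section
/- Assume the general finite-dominant sparse-error critical regime with composition sequence k_n/n → π ∈ [0,1]. Let N_n have law T_{n,k_n} (respectively T_{n,k_n+1}) and set Ĥ_n := N_n − (n−k_n)μ₀ − k_nμ₁ (same centering under both laws). Then for every u ∈ M and v ∈ M^⊥: under T_{n,k_n}, E exp(i⟨u, n^{−1/2}Π_G Ĥ_n⟩ + i⟨v, Π_J Ĥ_n⟩) converges to exp(−(1/2)⟨u, Σ u⟩ + Σ_{y∉D₀} (1−π)α₀(y)(e^{i⟨v, j_{0,y}⟩} − 1) + Σ_{y∉D₁} π α₁(y)(e^{i⟨v, j_{1,y}⟩} − 1)), and under T_{n,k_n+1} the same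 characteristic function converges to that limit multiplied by e^{i⟨v, Δ⟩}, where Σ := (1−π)Γ₀ + πΓ₁ and Δ := Π_J(μ₁ − μ₀). -/
open Finset

open Filter

namespace Regime

variable {Y : Type*} [Fintype Y] [DecidableEq Y]

/-- The histogram of a configuration of `m₀` zero-users and `m₁` one-users, as a
vector in `ℝ^𝒴`: `N = Σ_i e_{Y_i⁰} + Σ_j e_{Y_j¹}`. -/
noncomputable def hist {m₀ m₁ : ℕ} (ω : (Fin m₀ → Y) × (Fin m₁ → Y)) :
    EuclideanSpace ℝ Y :=
  (∑ i, EuclideanSpace.single (ω.1 i) (1 : ℝ)) +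
    ∑ j, EuclideanSpace.single (ω.2 j) (1 : ℝ)

/-- The characteristic function of the hybrid statistic
`(n^{−1/2}Π_G(N − c), Π_J(N − c))` at frequency `(u,v)`, when the histogram `N` has
law `T` given by `m₀` independent users with law `W_0^{(n)}` and `m₁` independent
users with law `W_1^{(n)}` (expectation written as a finite sum over configurations). -/
noncomputable def histCF (R : Regime Y) (n m₀ m₁ : ℕ) (c u v : EuclideanSpace ℝ Y) : ℂ :=
  ∑ ω : (Fin m₀ → Y) × (Fin m₁ → Y),
    ((((∏ i, R.W 0 n (ω.1 i)) * ∏ j, R.W 1 n (ω.2 j) : ℝ)) : ℂ) *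
      Complex.exp (Complex.I *
        (((inner ℝ u (((n : ℝ) ^ (-(1 : ℝ) / 2)) • R.PiG (hist ω - c)) : ℝ) : ℂ) +
          ((inner ℝ v (R.PiJ' (hist ω - c)) : ℝ) : ℂ)))

/-- The centering vector `(n−k)μ₀ + kμ₁`. -/
noncomputable def centering (R : Regime Y) (n k : ℕ) : EuclideanSpace ℝ Y :=
  ((n : ℝ) - (k : ℝ)) • R.μvec 0 + (k : ℝ) • R.μvec 1

/-- The limiting Lévy–Khintchine characteristic function
`exp(−(1/2)⟨u,Σu⟩ + Σ_{y∉D₀}(1−π)α₀(y)(e^{i⟨v,j_{0,y}⟩}−1)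
+ Σ_{y∉D₁}πα₁(y)(e^{i⟨v,j_{1,y}⟩}−1))` with `Σ = (1−π)Γ₀ + πΓ₁`. -/
noncomputable def limitCF (R : Regime Y) (π : ℝ) (u v : EuclideanSpace ℝ Y) : ℂ :=
  Complex.exp (
    -(1 / 2 : ℂ) * (((1 - π) * R.gammaQuad 0 u + π * R.gammaQuad 1 u : ℝ) : ℂ) +
      (∑ y ∈ (R.D 0)ᶜ, (((1 - π) * R.α 0 y : ℝ) : ℂ) *
        (Complex.exp (Complex.I * ((inner ℝ v (R.jump 0 y) : ℝ) : ℂ)) - 1)) +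
      ∑ y ∈ (R.D 1)ᶜ, ((π * R.α 1 y : ℝ) : ℂ) *
        (Complex.exp (Complex.I * ((inner ℝ v (R.jump 1 y) : ℝ) : ℂ)) - 1))

end Regime

namespace HybridAux
open Complex Regime

variable {Y : Type*} [Fintype Y] [DecidableEq Y]

lemma esum_apply (s : Finset Y) (f : Y → EuclideanSpace ℝ Y) (z : Y) :
    (∑ y ∈ s, f y) z = ∑ y ∈ s, f y z := by
  induction s using Finset.induction with
  | empty => rfl
  | insert a s h ih => rw [Finset.sum_insert h, Finset.sum_insert h, ← ih]; rfl

lemma PiG_add (R : Regime Y) (x y : EuclideanSpace ℝ Y) :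
    R.PiG (x + y) = R.PiG x + R.PiG y := by
  simp [Regime.PiG, map_add]

lemma PiG_smul (R : Regime Y) (c : ℝ) (x : EuclideanSpace ℝ Y) :
    R.PiG (c • x) = c • R.PiG x := by
  simp [Regime.PiG, map_smul]

lemma μvec_apply (R : Regime Y) (b : Fin 2) (z : Y) : R.μvec b z = R.p b z := by
  rw [Regime.μvec, esum_apply]
  by_cases hz : z ∈ R.D b
  · rw [Finset.sum_eq_single z]
    · simp [EuclideanSpace.single_apply]
    · intro w hw hwz
      have : ¬ z = w := fun h => hwz h.symm
      simp [EuclideanSpace.single_apply, this]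
    · intro h; exact absurd hz h
  · rw [R.p_supp b z hz, Finset.sum_eq_zero]
    intro w hw
    have : z ≠ w := fun h => hz (h ▸ hw)
    simp [EuclideanSpace.single_apply, this]

lemma single_sub_μvec_mem (R : Regime Y) (b : Fin 2) {y : Y} (hy : y ∈ R.D b) :
    EuclideanSpace.single y 1 - R.μvec b ∈ tangent (R.D b) := by
  constructor
  · intro z hz
    have hzy : z ≠ y := fun h => hz (h ▸ hy)
    show EuclideanSpace.single y 1 z - R.μvec b z = 0
    rw [μvec_apply, R.p_supp b z hz, EuclideanSpace.single_apply, if_neg hzy, sub_zero]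
  · have : ∀ z ∈ R.D b, (EuclideanSpace.single y (1:ℝ) - R.μvec b) z
        = (if z = y then (1:ℝ) else 0) - R.p b z := by
      intro z _
      show EuclideanSpace.single y 1 z - R.μvec b z = _
      rw [μvec_apply, EuclideanSpace.single_apply]
    rw [Finset.sum_congr rfl this, Finset.sum_sub_distrib, R.p_sum b,
      Finset.sum_ite_eq' (R.D b) y (fun _ => (1:ℝ)), if_pos hy, sub_self]

lemma tangent_le_M (R : Regime Y) (b : Fin 2) : tangent (R.D b) ≤ R.M := by
  rw [Regime.M, Submodule.add_eq_sup]
  fin_cases b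
  · exact le_sup_left
  · exact le_sup_right

lemma single_sub_μvec_mem_M (R : Regime Y) (b : Fin 2) {y : Y} (hy : y ∈ R.D b) :
    EuclideanSpace.single y 1 - R.μvec b ∈ R.M :=
  tangent_le_M R b (single_sub_μvec_mem R b hy)

lemma inner_PiG_eq {R : Regime Y} {u : EuclideanSpace ℝ Y} (hu : u ∈ R.M)
    (x : EuclideanSpace ℝ Y) : (inner ℝ u (R.PiG x) : ℝ) = inner ℝ u x := by
  have hmem : x - R.PiG x ∈ R.Mᗮ := R.M.sub_starProjection_mem_orthogonal x
  have h0 : (inner ℝ u (x - R.PiG x) : ℝ) = 0 :=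
    Submodule.inner_right_of_mem_orthogonal hu hmem
  rw [inner_sub_right] at h0
  linarith

lemma inner_PiJ'_eq {R : Regime Y} {v : EuclideanSpace ℝ Y} (hv : v ∈ R.Mᗮ)
    (x : EuclideanSpace ℝ Y) : (inner ℝ v (R.PiJ' x) : ℝ) = inner ℝ v x := by
  have hmem : R.PiG x ∈ R.M := (Submodule.orthogonalProjectionOnto R.M x).2
  have h0 : (inner ℝ v (R.PiG x) : ℝ) = 0 := by
    rw [real_inner_comm]
    exact Submodule.inner_right_of_mem_orthogonal hmem hv
  rw [Regime.PiJ', inner_sub_right, h0, sub_zero]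


lemma tendsto_pow_exp {z : ℕ → ℂ} {w : ℂ}
    (hz : Tendsto (fun n : ℕ => (n:ℂ) * (z n - 1)) atTop (nhds w))
    {m : ℕ → ℕ} {c : ℝ} (hm : Tendsto (fun n : ℕ => (m n : ℝ) / n) atTop (nhds c)) :
    Tendsto (fun n : ℕ => z n ^ m n) atTop (nhds (Complex.exp (c * w))) := by
  have hinv : Tendsto (fun n : ℕ => ((n:ℂ))⁻¹) atTop (nhds 0) := by
    have h2 := (Complex.continuous_ofReal.tendsto 0).comp tendsto_inv_atTop_nhds_zero_nat
    rw [Complex.ofReal_zero] at h2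
    refine h2.congr fun n => ?_
    simp [Function.comp]
  have hz1 : Tendsto z atTop (nhds 1) := by
    have h := hinv.mul hz
    rw [zero_mul] at h
    have he : ∀ᶠ n : ℕ in atTop, ((n:ℂ))⁻¹ * ((n:ℂ) * (z n - 1)) = z n - 1 := by
      filter_upwards [eventually_ge_atTop 1] with n hn
      have : (n:ℂ) ≠ 0 := by exact_mod_cast (Nat.cast_pos.mpr hn).ne'
      field_simp
    have h2 := (h.congr' he).add (tendsto_const_nhds (x := (1:ℂ)))
    simpa using h2
  set φ : ℂ → ℂ := fun ζ => if ζ = 1 then 1 else Complex.log ζ / (ζ - 1) with hφdef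
  have hφ : Tendsto φ (nhds 1) (nhds 1) := by
    have hder : HasDerivAt Complex.log 1 1 := by
      simpa using Complex.hasDerivAt_log (by simp : (1:ℂ) ∈ Complex.slitPlane)
    rw [hasDerivAt_iff_tendsto_slope] at hder
    nth_rewrite 1 [← nhdsNE_sup_pure (1:ℂ)]
    rw [Filter.tendsto_sup]
    constructor
    · refine hder.congr' ?_
      filter_upwards [self_mem_nhdsWithin] with ζ hζ
      simp only [Set.mem_compl_iff, Set.mem_singleton_iff] at hζ
      simp [hφdef, hζ, slope_def_field, Complex.log_one]
    · have : φ 1 = 1 := by simp [hφdef]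
      simpa [this] using tendsto_pure_nhds φ 1
  have hlog : Tendsto (fun n : ℕ => (n:ℂ) * Complex.log (z n)) atTop (nhds w) := by
    have h := hz.mul (hφ.comp hz1)
    rw [mul_one] at h
    refine h.congr (fun n => ?_)
    by_cases h1 : z n = 1
    · simp [h1, hφdef]
    · simp only [Function.comp, hφdef, if_neg h1]
      have : z n - 1 ≠ 0 := sub_ne_zero.mpr h1
      field_simp
  have hcm : Tendsto (fun n : ℕ => (m n : ℂ) * Complex.log (z n)) atTop (nhds ((c:ℂ) * w)) := by
    have h := ((Complex.continuous_ofReal.tendsto c).comp hm).mul hlog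
    refine h.congr' ?_
    filter_upwards [eventually_ge_atTop 1] with n hn
    have hn' : (n:ℂ) ≠ 0 := by exact_mod_cast (Nat.cast_pos.mpr hn).ne'
    simp only [Function.comp]
    push_cast
    field_simp
  have hzne : ∀ᶠ n : ℕ in atTop, z n ≠ 0 := hz1.eventually_ne one_ne_zero
  have h := (Complex.continuous_exp.tendsto _).comp hcm
  refine h.congr' ?_
  filter_upwards [hzne] with n hn
  simp only [Function.comp]
  rw [← Complex.exp_log hn, ← Complex.exp_nat_mul, Complex.exp_log hn]


noncomputable def sfun (n : ℕ) : ℝ := (n : ℝ) ^ (-(1:ℝ)/2)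

lemma sfun_nonneg (n : ℕ) : 0 ≤ sfun n := Real.rpow_nonneg (Nat.cast_nonneg n) _

lemma sfun_tendsto : Tendsto sfun atTop (nhds 0) := by
  have h1 : Tendsto (fun x : ℝ => x ^ (-(1/2) : ℝ)) atTop (nhds 0) :=
    tendsto_rpow_neg_atTop (by norm_num)
  have h2 := h1.comp (tendsto_natCast_atTop_atTop (R := ℝ))
  refine h2.congr fun n => ?_
  simp only [Function.comp, sfun]
  norm_num

lemma sfun_sq {n : ℕ} (hn : 1 ≤ n) : (n : ℝ) * (sfun n * sfun n) = 1 := by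
  have h0 : (0:ℝ) < n := Nat.cast_pos.mpr hn
  rw [sfun, ← Real.rpow_add h0]
  norm_num
  rw [Real.rpow_neg_one]
  field_simp

lemma sfun_cube {n : ℕ} (hn : 1 ≤ n) : (n : ℝ) * (sfun n * sfun n * sfun n) = sfun n := by
  have h1 := sfun_sq hn
  calc (n:ℝ) * (sfun n * sfun n * sfun n) = ((n:ℝ) * (sfun n * sfun n)) * sfun n := by ring
  _ = sfun n := by rw [h1, one_mul]

lemma quad_limit (a : ℝ) :
    Tendsto (fun n : ℕ => (n:ℂ) *
      (Complex.exp (Complex.I * ((sfun n * a : ℝ) : ℂ)) - 1 - Complex.I * ((sfun n * a : ℝ) : ℂ)))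
      atTop (nhds (-(((a:ℂ))^2)/2)) := by
  set x : ℕ → ℂ := fun n => Complex.I * ((sfun n * a : ℝ) : ℂ) with hx
  have hxabs : ∀ n, ‖x n‖ = sfun n * |a| := by
    intro n
    rw [hx]
    simp only [norm_mul, Complex.norm_I, Complex.norm_real, Real.norm_eq_abs, one_mul, abs_mul]
    rw [_root_.abs_of_nonneg (sfun_nonneg n)]
  have hxt : Tendsto (fun n => x n) atTop (nhds 0) := by
    have h0 := sfun_tendsto.mul_const a
    rw [zero_mul] at h0
    have := (Complex.continuous_ofReal.tendsto 0).comp h0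
    have h2 := this.const_mul Complex.I
    rw [Complex.ofReal_zero, mul_zero] at h2
    exact h2.congr fun n => by simp [Function.comp, hx]
  have key : ∀ n : ℕ, 1 ≤ n → (n:ℂ) * (Complex.exp (x n) - 1 - x n)
      = -(((a:ℂ))^2)/2 + (n:ℂ) * (Complex.exp (x n) - (1 + x n + x n ^ 2 / 2)) := by
    intro n hn
    have hsq : ((n:ℂ)) * (x n)^2 = -(((a:ℂ))^2) := by
      have h1 : ((n:ℝ) * (sfun n * sfun n) : ℝ) = 1 := sfun_sq hn
      have hc : ((n:ℂ)) * (((sfun n : ℝ):ℂ) * ((sfun n : ℝ):ℂ)) = 1 := by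
        have := congrArg (Complex.ofReal) h1
        push_cast at this ⊢
        linear_combination this
      calc ((n:ℂ)) * (x n)^2 = Complex.I^2 * ((((sfun n : ℝ):ℂ) * (a:ℂ))^2) * (n:ℂ) := by
            rw [hx]; push_cast; ring
      _ = -(((n:ℂ) * (((sfun n : ℝ):ℂ) * ((sfun n : ℝ):ℂ))) * (a:ℂ)^2) := by rw [Complex.I_sq]; ring
      _ = -(((a:ℂ))^2) := by rw [hc, one_mul]
    have hh : Complex.exp (x n) - 1 - x n
        = (x n)^2/2 + (Complex.exp (x n) - (1 + x n + x n^2/2)) := by ring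
    rw [hh, mul_add]
    congr 1
    rw [show (n:ℂ) * ((x n)^2/2) = ((n:ℂ) * (x n)^2)/2 by ring, hsq]
  have hrem : Tendsto (fun n : ℕ => (n:ℂ) * (Complex.exp (x n) - (1 + x n + x n ^ 2 / 2)))
      atTop (nhds 0) := by
    have habs0 : Tendsto (fun n => ‖x n‖) atTop (nhds 0) := by
      have := hxt.norm
      rw [norm_zero] at this
      exact this
    have hsmall : ∀ᶠ n : ℕ in atTop, ‖x n‖ ≤ 1 :=
      habs0.eventually_le_const (by norm_num : (0:ℝ) < 1)
    apply squeeze_zero_norm' (a := fun n : ℕ => sfun n * |a|^3)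
    · filter_upwards [hsmall, eventually_ge_atTop 1] with n hn1 hn2
      have hb := Complex.exp_bound hn1 (by norm_num : 0 < 3)
      have hsum : ∑ m ∈ Finset.range 3, (x n) ^ m / m.factorial = 1 + x n + x n ^ 2 / 2 := by
        rw [Finset.sum_range_succ, Finset.sum_range_succ, Finset.sum_range_one]
        norm_num [Nat.factorial]
      rw [hsum] at hb
      have h3 : ‖x n‖ ^ 3 * ((3+1 : ℕ) : ℝ) * ((Nat.factorial 3 * 3 : ℝ))⁻¹
          ≤ ‖x n‖ ^ 3 := by
        have h4 : (0:ℝ) ≤ ‖x n‖ ^ 3 := by positivity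
        have : (((3:ℕ)+1 : ℕ) : ℝ) * ((Nat.factorial 3 * 3 : ℝ))⁻¹ ≤ 1 := by norm_num [Nat.factorial]
        nlinarith
      have hnorm : ‖(n:ℂ) * (Complex.exp (x n) - (1 + x n + x n ^ 2 / 2))‖
          = (n:ℝ) * ‖Complex.exp (x n) - (1 + x n + x n ^ 2 / 2)‖ := by
        simp [norm_mul]
      rw [hnorm]
      have hfin : (n:ℝ) * ‖x n‖ ^ 3 = sfun n * |a|^3 := by
        rw [hxabs]
        have := sfun_cube hn2
        calc (n:ℝ) * (sfun n * |a|)^3 = ((n:ℝ) * (sfun n * sfun n * sfun n)) * |a|^3 := by ring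
        _ = sfun n * |a|^3 := by rw [this]
      calc (n:ℝ) * ‖Complex.exp (x n) - (1 + x n + x n ^ 2 / 2)‖
          ≤ (n:ℝ) * (‖x n‖ ^ 3 * ((3+1 : ℕ) : ℝ) * ((Nat.factorial 3 * 3 : ℝ))⁻¹) := by
            have hn0 : (0:ℝ) ≤ n := Nat.cast_nonneg n
            have hb' := hb
            nlinarith [norm_nonneg (Complex.exp (x n) - (1 + x n + x n ^ 2 / 2))]
      _ ≤ (n:ℝ) * (‖x n‖ ^ 3) := by
            have hn0 : (0:ℝ) ≤ n := Nat.cast_nonneg n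
            nlinarith
      _ = sfun n * |a|^3 := hfin
    · have := sfun_tendsto.mul_const (|a|^3)
      rw [zero_mul] at this
      exact this
  have hmain := (tendsto_const_nhds (x := -(((a:ℂ))^2)/2)).add hrem
  rw [add_zero] at hmain
  refine hmain.congr' ?_
  filter_upwards [eventually_ge_atTop 1] with n hn
  exact (key n hn).symm


noncomputable def expo (R : Regime Y) (n : ℕ) (u v : EuclideanSpace ℝ Y) :
    EuclideanSpace ℝ Y →ₗ[ℝ] ℝ where
  toFun x := ((n : ℝ) ^ (-(1:ℝ)/2)) * (inner ℝ u (R.PiG x) : ℝ) + (inner ℝ v (R.PiJ' x) : ℝ)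
  map_add' x y := by
    have h1 : R.PiJ' (x + y) = R.PiJ' x + R.PiJ' y := by
      simp only [Regime.PiJ', PiG_add]; abel
    rw [PiG_add, h1, inner_add_right, inner_add_right]; ring
  map_smul' c x := by
    have h1 : R.PiJ' (c • x) = c • R.PiJ' x := by
      simp only [Regime.PiJ', PiG_smul, smul_sub]
    rw [PiG_smul, h1, real_inner_smul_right, real_inner_smul_right]
    simp only [RingHom.id_apply, smul_eq_mul]; ring

lemma expo_eq {R : Regime Y} (n : ℕ) {u v : EuclideanSpace ℝ Y}
    (hu : u ∈ R.M) (hv : v ∈ R.Mᗮ) (x : EuclideanSpace ℝ Y) :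
    expo R n u v x = ((n : ℝ) ^ (-(1:ℝ)/2)) * (inner ℝ u x : ℝ) + (inner ℝ v x : ℝ) := by
  show ((n : ℝ) ^ (-(1:ℝ)/2)) * (inner ℝ u (R.PiG x) : ℝ) + (inner ℝ v (R.PiJ' x) : ℝ) = _
  rw [inner_PiG_eq hu, inner_PiJ'_eq hv]

lemma histCF_eq (R : Regime Y) (n m₀ m₁ : ℕ) (u v d : EuclideanSpace ℝ Y) :
    R.histCF n m₀ m₁ ((m₀ : ℝ) • R.μvec 0 + (m₁ : ℝ) • R.μvec 1 + d) u v =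
    (∑ y, ((R.W 0 n y : ℝ) : ℂ) * Complex.exp (Complex.I *
        ((expo R n u v (EuclideanSpace.single y 1 - R.μvec 0) : ℝ) : ℂ))) ^ m₀ *
    (∑ y, ((R.W 1 n y : ℝ) : ℂ) * Complex.exp (Complex.I *
        ((expo R n u v (EuclideanSpace.single y 1 - R.μvec 1) : ℝ) : ℂ))) ^ m₁ *
    Complex.exp (- Complex.I * ((expo R n u v d : ℝ) : ℂ)) := by
  set c : EuclideanSpace ℝ Y := (m₀ : ℝ) • R.μvec 0 + (m₁ : ℝ) • R.μvec 1 + d with hc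
  set E := expo R n u v with hE
  set g₀ : Y → ℂ := fun y => ((R.W 0 n y : ℝ) : ℂ) * Complex.exp (Complex.I *
      ((E (EuclideanSpace.single y 1 - R.μvec 0) : ℝ) : ℂ)) with hg₀
  set g₁ : Y → ℂ := fun y => ((R.W 1 n y : ℝ) : ℂ) * Complex.exp (Complex.I *
      ((E (EuclideanSpace.single y 1 - R.μvec 1) : ℝ) : ℂ)) with hg₁
  set K : ℂ := Complex.exp (- Complex.I * ((E d : ℝ) : ℂ)) with hK
  have step1 : R.histCF n m₀ m₁ c u v =
      ∑ ω : (Fin m₀ → Y) × (Fin m₁ → Y), ((∏ i, g₀ (ω.1 i)) * ∏ j, g₁ (ω.2 j)) * K := by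
    rw [Regime.histCF]
    refine Finset.sum_congr rfl fun ω _ => ?_
    have hωsum : Regime.hist ω - c =
        (∑ i, (EuclideanSpace.single (ω.1 i) 1 - R.μvec 0)) +
        (∑ j, (EuclideanSpace.single (ω.2 j) 1 - R.μvec 1)) - d := by
      rw [Regime.hist, hc, Finset.sum_sub_distrib, Finset.sum_sub_distrib]
      simp only [Finset.sum_const, Finset.card_univ, Fintype.card_fin]
      rw [← Nat.cast_smul_eq_nsmul ℝ m₀ (R.μvec 0), ← Nat.cast_smul_eq_nsmul ℝ m₁ (R.μvec 1)]
      abel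
    have hexp : ((inner ℝ u (((n : ℝ) ^ (-(1 : ℝ) / 2)) • R.PiG (Regime.hist ω - c)) : ℝ) : ℂ) +
        ((inner ℝ v (R.PiJ' (Regime.hist ω - c)) : ℝ) : ℂ)
        = ((E (Regime.hist ω - c) : ℝ) : ℂ) := by
      rw [real_inner_smul_right, ← Complex.ofReal_add]
      rfl
    have hdecomp : E (Regime.hist ω - c) =
        (∑ i, E (EuclideanSpace.single (ω.1 i) 1 - R.μvec 0)) +
        (∑ j, E (EuclideanSpace.single (ω.2 j) 1 - R.μvec 1)) - E d := by
      rw [hωsum, map_sub, map_add, map_sum, map_sum]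
    rw [hexp, hdecomp]
    push_cast
    rw [show Complex.I * ((∑ i, (E (EuclideanSpace.single (ω.1 i) 1 - R.μvec 0) : ℂ)) +
        (∑ j, (E (EuclideanSpace.single (ω.2 j) 1 - R.μvec 1) : ℂ)) - (E d : ℂ))
        = (∑ i, Complex.I * (E (EuclideanSpace.single (ω.1 i) 1 - R.μvec 0) : ℂ)) +
          ((∑ j, Complex.I * (E (EuclideanSpace.single (ω.2 j) 1 - R.μvec 1) : ℂ)) +
          (- Complex.I * (E d : ℂ))) by
      rw [mul_sub, mul_add, Finset.mul_sum, Finset.mul_sum]; ring]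
    rw [Complex.exp_add, Complex.exp_add, Complex.exp_sum, Complex.exp_sum]
    rw [hg₀, hg₁, hK]
    simp only []
    rw [Finset.prod_mul_distrib, Finset.prod_mul_distrib]
    push_cast
    ring
  rw [step1, ← Finset.sum_mul, Fintype.sum_prod_type]
  simp only [← Finset.mul_sum, ← Finset.sum_mul]
  rw [← Fintype.sum_pow, ← Fintype.sum_pow]

noncomputable def zseq (R : Regime Y) (n : ℕ) (u v : EuclideanSpace ℝ Y) (b : Fin 2) : ℂ :=
  ∑ y, ((R.W b n y : ℝ) : ℂ) * Complex.exp (Complex.I *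
    ((expo R n u v (EuclideanSpace.single y 1 - R.μvec b) : ℝ) : ℂ))

noncomputable def wlim (R : Regime Y) (u v : EuclideanSpace ℝ Y) (b : Fin 2) : ℂ :=
  (∑ y ∈ R.D b, -(((R.p b y * (inner ℝ u (EuclideanSpace.single y 1 - R.μvec b) : ℝ) ^ 2 : ℝ) : ℂ)) / 2) +
  ∑ y ∈ (R.D b)ᶜ, ((R.α b y : ℝ) : ℂ) *
    (Complex.exp (Complex.I * ((inner ℝ v (EuclideanSpace.single y 1 - R.μvec b) : ℝ) : ℂ)) - 1)

lemma sum_p_smul (R : Regime Y) (b : Fin 2) :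
    ∑ y ∈ R.D b, R.p b y • (EuclideanSpace.single y (1:ℝ) - R.μvec b) = 0 := by
  have h1 : ∑ y ∈ R.D b, R.p b y • (EuclideanSpace.single y (1:ℝ) - R.μvec b)
      = (∑ y ∈ R.D b, R.p b y • EuclideanSpace.single y (1:ℝ)) -
        (∑ y ∈ R.D b, R.p b y) • R.μvec b := by
    rw [Finset.sum_smul, ← Finset.sum_sub_distrib]
    exact Finset.sum_congr rfl fun y _ => smul_sub _ _ _
  rw [h1, R.p_sum, one_smul]
  rw [show (∑ y ∈ R.D b, R.p b y • EuclideanSpace.single y (1:ℝ)) = R.μvec b from rfl]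
  exact sub_self _

lemma sum_p_inner (R : Regime Y) (b : Fin 2) (u : EuclideanSpace ℝ Y) :
    ∑ y ∈ R.D b, R.p b y * (inner ℝ u (EuclideanSpace.single y 1 - R.μvec b) : ℝ) = 0 := by
  have h1 : (inner ℝ u (∑ y ∈ R.D b, R.p b y • (EuclideanSpace.single y (1:ℝ) - R.μvec b)) : ℝ)
      = ∑ y ∈ R.D b, R.p b y * (inner ℝ u (EuclideanSpace.single y 1 - R.μvec b) : ℝ) := by
    rw [inner_sum]
    exact Finset.sum_congr rfl fun y _ => real_inner_smul_right _ _ _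
  rw [← h1, sum_p_smul, inner_zero_right]

lemma tendsto_n_zseq (R : Regime Y) {u v : EuclideanSpace ℝ Y}
    (hu : u ∈ R.M) (hv : v ∈ R.Mᗮ) (b : Fin 2) :
    Tendsto (fun n : ℕ => (n : ℂ) * (zseq R n u v b - 1)) atTop (nhds (wlim R u v b)) := by
  set A : Y → ℝ := fun y => (inner ℝ u (EuclideanSpace.single y 1 - R.μvec b) : ℝ) with hA
  set C : Y → ℝ := fun y => (inner ℝ v (EuclideanSpace.single y 1 - R.μvec b) : ℝ) with hC
  have hθ : ∀ (n : ℕ) (y : Y),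
      expo R n u v (EuclideanSpace.single y 1 - R.μvec b) = sfun n * A y + C y :=
    fun n y => expo_eq n hu hv _
  have hCD : ∀ y ∈ R.D b, C y = 0 := by
    intro y hy
    rw [hC]
    simp only []
    rw [real_inner_comm]
    exact Submodule.inner_right_of_mem_orthogonal (single_sub_μvec_mem_M R b hy) hv
  -- decomposition
  set F : ℕ → Y → ℂ := fun n y => (n : ℂ) * ((R.W b n y : ℝ) : ℂ) *
      (Complex.exp (Complex.I * ((sfun n * A y + C y : ℝ) : ℂ)) - 1) with hF
  set T : ℕ → Y → ℂ := fun n y => F n y -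
      Complex.I * (((n : ℝ) * sfun n : ℝ) : ℂ) * ((R.p b y * A y : ℝ) : ℂ) with hT
  have hsplit : ∀ n : ℕ, (n : ℂ) * (zseq R n u v b - 1)
      = (∑ y ∈ R.D b, T n y) + ∑ y ∈ (R.D b)ᶜ, F n y := by
    intro n
    have h1 : zseq R n u v b - 1 = ∑ y, ((R.W b n y : ℝ) : ℂ) *
        (Complex.exp (Complex.I * ((sfun n * A y + C y : ℝ) : ℂ)) - 1) := by
      rw [zseq]
      have hsum1 : (1 : ℂ) = ∑ y, ((R.W b n y : ℝ) : ℂ) := by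
        rw [← Complex.ofReal_sum, R.W_sum b n, Complex.ofReal_one]
      nth_rewrite 1 [hsum1]
      rw [← Finset.sum_sub_distrib]
      refine Finset.sum_congr rfl fun y _ => ?_
      rw [hθ n y]
      ring
    rw [h1, Finset.mul_sum]
    rw [← Finset.sum_add_sum_compl (R.D b) (fun y => (n:ℂ) * (((R.W b n y : ℝ) : ℂ) *
        (Complex.exp (Complex.I * ((sfun n * A y + C y : ℝ) : ℂ)) - 1)))]
    congr 1
    · have hzero : ∑ y ∈ R.D b,
          Complex.I * (((n : ℝ) * sfun n : ℝ) : ℂ) * ((R.p b y * A y : ℝ) : ℂ) = 0 := by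
        rw [← Finset.mul_sum, ← Complex.ofReal_sum, sum_p_inner R b u]
        simp
      have : ∑ y ∈ R.D b, T n y = (∑ y ∈ R.D b, F n y) -
          ∑ y ∈ R.D b, Complex.I * (((n : ℝ) * sfun n : ℝ) : ℂ) * ((R.p b y * A y : ℝ) : ℂ) := by
        rw [← Finset.sum_sub_distrib]
      rw [this, hzero, sub_zero]
      exact Finset.sum_congr rfl fun y _ => by rw [hF]; ring
    · exact Finset.sum_congr rfl fun y _ => by rw [hF]; ring
  -- limit on the complement
  have hlimF : ∀ y ∈ (R.D b)ᶜ, Tendsto (fun n : ℕ => F n y) atTop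
      (nhds (((R.α b y : ℝ) : ℂ) * (Complex.exp (Complex.I * ((C y : ℝ) : ℂ)) - 1))) := by
    intro y hy
    have hy' : y ∉ R.D b := Finset.mem_compl.mp hy
    have h1 : Tendsto (fun n : ℕ => (n : ℂ) * ((R.W b n y : ℝ) : ℂ)) atTop
        (nhds ((R.α b y : ℝ) : ℂ)) := by
      have := (Complex.continuous_ofReal.tendsto _).comp (R.W_rare b y hy')
      refine this.congr fun n => ?_
      simp [Function.comp]
    have h2 : Tendsto (fun n : ℕ => Complex.exp (Complex.I * ((sfun n * A y + C y : ℝ) : ℂ)) - 1)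
        atTop (nhds (Complex.exp (Complex.I * ((C y : ℝ) : ℂ)) - 1)) := by
      have ha : Tendsto (fun n : ℕ => sfun n * A y + C y) atTop (nhds (C y)) := by
        have := sfun_tendsto.mul_const (A y)
        rw [zero_mul] at this
        have h3 := this.add_const (C y)
        rw [zero_add] at h3
        exact h3
      have hcont : Continuous (fun x : ℝ => Complex.exp (Complex.I * ((x : ℝ) : ℂ))) :=
        Complex.continuous_exp.comp (continuous_const.mul Complex.continuous_ofReal)
      have h6 := (hcont.tendsto (C y)).comp ha
      exact (h6.congr fun n => rfl).sub_const 1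
    exact h1.mul h2
  -- limit on the dominant set
  have hlimT : ∀ y ∈ R.D b, Tendsto (fun n : ℕ => T n y) atTop
      (nhds (-(((R.p b y * A y ^ 2 : ℝ) : ℂ)) / 2)) := by
    intro y hy
    have hCy : C y = 0 := hCD y hy
    have hTeq : ∀ n : ℕ, T n y =
        (((n : ℝ) * (R.W b n y - R.p b y) : ℝ) : ℂ) *
          (Complex.exp (Complex.I * ((sfun n * A y : ℝ) : ℂ)) - 1) +
        ((R.p b y : ℝ) : ℂ) * ((n : ℂ) *
          (Complex.exp (Complex.I * ((sfun n * A y : ℝ) : ℂ)) - 1 -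
            Complex.I * ((sfun n * A y : ℝ) : ℂ))) := by
      intro n
      simp only [hT, hF, hCy, add_zero]
      push_cast
      ring
    have hpart1 : Tendsto (fun n : ℕ =>
        (((n : ℝ) * (R.W b n y - R.p b y) : ℝ) : ℂ) *
          (Complex.exp (Complex.I * ((sfun n * A y : ℝ) : ℂ)) - 1)) atTop (nhds 0) := by
      obtain ⟨Cb, hCb⟩ := R.W_dom b
      have hexp0 : Tendsto (fun n : ℕ =>
          ‖Complex.exp (Complex.I * ((sfun n * A y : ℝ) : ℂ)) - 1‖) atTop (nhds 0) := by
        have ha : Tendsto (fun n : ℕ => sfun n * A y) atTop (nhds 0) := by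
          have := sfun_tendsto.mul_const (A y); rwa [zero_mul] at this
        have hcont : Continuous (fun x : ℝ => Complex.exp (Complex.I * ((x : ℝ) : ℂ))) :=
          Complex.continuous_exp.comp (continuous_const.mul Complex.continuous_ofReal)
        have h4 := (hcont.tendsto 0).comp ha
        have h5 := ((h4.congr fun n => rfl).sub_const 1).norm
        simp only [Complex.ofReal_zero, mul_zero, Complex.exp_zero, sub_self, norm_zero] at h5
        exact h5
      apply squeeze_zero_norm'
        (a := fun n : ℕ => |Cb| * ‖Complex.exp (Complex.I * ((sfun n * A y : ℝ) : ℂ)) - 1‖)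
      · filter_upwards [eventually_ge_atTop 1] with n hn
        have hW := hCb y hy n hn
        have hn0 : (0:ℝ) < n := Nat.cast_pos.mpr hn
        have hb1 : |(n : ℝ) * (R.W b n y - R.p b y)| ≤ |Cb| := by
          rw [abs_mul, abs_of_pos hn0]
          calc (n:ℝ) * |R.W b n y - R.p b y| ≤ (n:ℝ) * (Cb / n) := by
                exact mul_le_mul_of_nonneg_left hW hn0.le
          _ = Cb := by field_simp
          _ ≤ |Cb| := le_abs_self Cb
        rw [norm_mul, Complex.norm_real, Real.norm_eq_abs]
        exact mul_le_mul_of_nonneg_right hb1 (norm_nonneg _)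
      · have := hexp0.const_mul |Cb|
        rwa [mul_zero] at this
    have hpart2 : Tendsto (fun n : ℕ => ((R.p b y : ℝ) : ℂ) * ((n : ℂ) *
        (Complex.exp (Complex.I * ((sfun n * A y : ℝ) : ℂ)) - 1 -
          Complex.I * ((sfun n * A y : ℝ) : ℂ)))) atTop
        (nhds (((R.p b y : ℝ) : ℂ) * (-(((A y : ℝ) : ℂ) ^ 2) / 2))) :=
      (quad_limit (A y)).const_mul ((R.p b y : ℝ) : ℂ)
    have hcomb := hpart1.add hpart2
    rw [zero_add] at hcomb
    have hval : ((R.p b y : ℝ) : ℂ) * (-(((A y : ℝ) : ℂ) ^ 2) / 2)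
        = -(((R.p b y * A y ^ 2 : ℝ) : ℂ)) / 2 := by push_cast; ring
    rw [hval] at hcomb
    exact hcomb.congr fun n => (hTeq n).symm
  have hDlim := tendsto_finset_sum (R.D b) hlimT
  have hClim := tendsto_finset_sum (R.D b)ᶜ hlimF
  have htotal := hDlim.add hClim
  exact (htotal.congr fun n => (hsplit n).symm :)

end HybridAux

open Regime in
/-- Weak Lévy–Khintchine convergence of the full hybrid statistic
(Theorem 3.1(i), characteristic-function form): under `T_{n,kₙ}` the characteristic
function of `(n^{−1/2}Π_G Ĥ_n, Π_J Ĥ_n)` converges to the Lévy–Khintchine limit, and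
under the neighboring alternative `T_{n,kₙ+1}` (same centering) it converges to the
same limit multiplied by `e^{i⟨v,Δ⟩}`, `Δ = Π_J(μ₁−μ₀)`. -/
theorem hybrid_levy_khintchine_cf_convergence
    {Y : Type*} [Fintype Y] [DecidableEq Y] (R : Regime Y)
    (k : ℕ → ℕ) (hk : ∀ n, 1 ≤ n → k n ≤ n - 1)
    (π : ℝ) (hπ0 : 0 ≤ π) (hπ1 : π ≤ 1)
    (hkπ : Tendsto (fun n : ℕ => (k n : ℝ) / n) atTop (nhds π))
    (u v : EuclideanSpace ℝ Y) (hu : u ∈ R.M) (hv : v ∈ R.Mᗮ) :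
    Tendsto (fun n : ℕ => R.histCF n (n - k n) (k n) (R.centering n (k n)) u v)
      atTop (nhds (R.limitCF π u v)) ∧
    Tendsto (fun n : ℕ => R.histCF n (n - (k n + 1)) (k n + 1) (R.centering n (k n)) u v)
      atTop (nhds (R.limitCF π u v *
        Complex.exp (Complex.I *
          ((inner ℝ v (R.PiJ' (R.μvec 1 - R.μvec 0)) : ℝ) : ℂ)))) := by
  classical
  have hw0 := HybridAux.tendsto_n_zseq R hu hv 0
  have hw1 := HybridAux.tendsto_n_zseq R hu hv 1
  have hkle : ∀ n : ℕ, 1 ≤ n → k n + 1 ≤ n := by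
    intro n hn
    have := hk n hn
    omega
  -- composition fraction limits
  have hinv : Tendsto (fun n : ℕ => (1 : ℝ) / n) atTop (nhds 0) := by
    simpa using tendsto_one_div_atTop_nhds_zero_nat (𝕜 := ℝ)
  have hm0 : Tendsto (fun n : ℕ => (((n - k n : ℕ) : ℝ)) / n) atTop (nhds (1 - π)) := by
    have h1 : Tendsto (fun n : ℕ => 1 - (k n : ℝ) / n) atTop (nhds (1 - π)) :=
      tendsto_const_nhds.sub hkπ
    refine h1.congr' ?_
    filter_upwards [eventually_ge_atTop 1] with n hn
    have hkn : k n ≤ n := le_trans (hk n hn) (Nat.sub_le n 1)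
    have hn0 : (n : ℝ) ≠ 0 := Nat.cast_ne_zero.mpr (Nat.one_le_iff_ne_zero.mp hn)
    rw [Nat.cast_sub hkn]
    field_simp
  have hm1 : Tendsto (fun n : ℕ => ((k n : ℝ)) / n) atTop (nhds π) := hkπ
  have hm0' : Tendsto (fun n : ℕ => (((n - (k n + 1) : ℕ) : ℝ)) / n) atTop (nhds (1 - π)) := by
    have h1 : Tendsto (fun n : ℕ => 1 - (k n : ℝ) / n - 1 / n) atTop (nhds (1 - π - 0)) :=
      (tendsto_const_nhds.sub hkπ).sub hinv
    rw [sub_zero] at h1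
    refine h1.congr' ?_
    filter_upwards [eventually_ge_atTop 1] with n hn
    have hkn : k n + 1 ≤ n := hkle n hn
    have hn0 : (n : ℝ) ≠ 0 := Nat.cast_ne_zero.mpr (Nat.one_le_iff_ne_zero.mp hn)
    rw [Nat.cast_sub hkn]
    push_cast
    field_simp
    ring
  have hm1' : Tendsto (fun n : ℕ => (((k n + 1 : ℕ) : ℝ)) / n) atTop (nhds π) := by
    have h1 : Tendsto (fun n : ℕ => (k n : ℝ) / n + 1 / n) atTop (nhds (π + 0)) :=
      hkπ.add hinv
    rw [add_zero] at h1
    refine h1.congr fun n => ?_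
    push_cast
    rw [add_div]
  -- power limits
  have hp0 := HybridAux.tendsto_pow_exp hw0 hm0
  have hp1 := HybridAux.tendsto_pow_exp hw1 hm1
  have hp0' := HybridAux.tendsto_pow_exp hw0 hm0'
  have hp1' := HybridAux.tendsto_pow_exp hw1 hm1'
  -- identification of the limit
  have hj : ∀ (b : Fin 2) (y : Y), (inner ℝ v (R.jump b y) : ℝ)
      = (inner ℝ v (EuclideanSpace.single y 1 - R.μvec b) : ℝ) := fun b y =>
    HybridAux.inner_PiJ'_eq hv _
  have hgb : ∀ b : Fin 2,
      (∑ y ∈ R.D b, -(((R.p b y * (inner ℝ u (EuclideanSpace.single y 1 - R.μvec b) : ℝ) ^ 2 : ℝ) : ℂ)) / 2)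
      = -(((R.gammaQuad b u : ℝ) : ℂ)) / 2 := by
    intro b
    rw [Regime.gammaQuad]
    push_cast
    rw [← Finset.sum_neg_distrib, ← Finset.sum_div]
  have hLK : Complex.exp (((1 - π : ℝ) : ℂ) * HybridAux.wlim R u v 0) *
      Complex.exp (((π : ℝ) : ℂ) * HybridAux.wlim R u v 1) = R.limitCF π u v := by
    rw [← Complex.exp_add, Regime.limitCF]
    congr 1
    rw [HybridAux.wlim, HybridAux.wlim, hgb 0, hgb 1]
    simp only [hj]
    simp only [Complex.ofReal_mul, mul_assoc, ← Finset.mul_sum]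
    push_cast
    ring
  constructor
  · -- null case
    have heq1 : ∀ᶠ n : ℕ in atTop,
        (HybridAux.zseq R n u v 0) ^ (n - k n) * (HybridAux.zseq R n u v 1) ^ (k n)
        = R.histCF n (n - k n) (k n) (R.centering n (k n)) u v := by
      filter_upwards [eventually_ge_atTop 1] with n hn
      have hkn : k n ≤ n := le_trans (hk n hn) (Nat.sub_le n 1)
      have hc : R.centering n (k n) = (((n - k n : ℕ)) : ℝ) • R.μvec 0 +
          (((k n : ℕ)) : ℝ) • R.μvec 1 + 0 := by
        rw [Regime.centering, Nat.cast_sub hkn, add_zero]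
      rw [hc, HybridAux.histCF_eq, map_zero]
      simp [HybridAux.zseq]
    have hlim := hp0.mul hp1
    rw [hLK] at hlim
    exact hlim.congr' heq1
  · -- alternative case
    set a : ℝ := (inner ℝ u (R.μvec 0 - R.μvec 1) : ℝ) with ha
    set c : ℝ := (inner ℝ v (R.μvec 0 - R.μvec 1) : ℝ) with hc
    have hP : Tendsto (fun n : ℕ =>
        Complex.exp (- Complex.I * ((HybridAux.sfun n * a + c : ℝ) : ℂ))) atTop
        (nhds (Complex.exp (- Complex.I * ((c : ℝ) : ℂ)))) := by
      have haa : Tendsto (fun n : ℕ => HybridAux.sfun n * a + c) atTop (nhds c) := by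
        have h2 := HybridAux.sfun_tendsto.mul_const a
        rw [zero_mul] at h2
        have h3 := h2.add_const c
        rwa [zero_add] at h3
      have hcont : Continuous (fun x : ℝ => Complex.exp (- Complex.I * ((x : ℝ) : ℂ))) :=
        Complex.continuous_exp.comp (continuous_const.mul Complex.continuous_ofReal)
      exact ((hcont.tendsto c).comp haa).congr fun n => rfl
    have heq2 : ∀ᶠ n : ℕ in atTop,
        (HybridAux.zseq R n u v 0) ^ (n - (k n + 1)) * (HybridAux.zseq R n u v 1) ^ (k n + 1) *
          Complex.exp (- Complex.I * ((HybridAux.sfun n * a + c : ℝ) : ℂ))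
        = R.histCF n (n - (k n + 1)) (k n + 1) (R.centering n (k n)) u v := by
      filter_upwards [eventually_ge_atTop 1] with n hn
      have hkn : k n + 1 ≤ n := hkle n hn
      have hc2 : R.centering n (k n) = (((n - (k n + 1) : ℕ)) : ℝ) • R.μvec 0 +
          (((k n + 1 : ℕ)) : ℝ) • R.μvec 1 + (R.μvec 0 - R.μvec 1) := by
        rw [Regime.centering, Nat.cast_sub hkn]
        push_cast
        module
      rw [hc2, HybridAux.histCF_eq]
      have hd : HybridAux.expo R n u v (R.μvec 0 - R.μvec 1) = HybridAux.sfun n * a + c := by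
        rw [HybridAux.expo_eq n hu hv]
        rfl
      rw [hd]
      simp [HybridAux.zseq]
    have hfin : Complex.exp (- Complex.I * ((c : ℝ) : ℂ))
        = Complex.exp (Complex.I * ((inner ℝ v (R.PiJ' (R.μvec 1 - R.μvec 0)) : ℝ) : ℂ)) := by
      rw [HybridAux.inner_PiJ'_eq hv]
      have : (inner ℝ v (R.μvec 1 - R.μvec 0) : ℝ) = -c := by
        rw [hc, ← inner_neg_right]
        congr 1
        abel
      rw [this]
      push_cast
      ring_nf
    have hlim := (hp0'.mul hp1').mul hP
    rw [hLK, hfin] at hlim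
    exact hlim.congr' heq2
end
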